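/- arXiv:1602.06094 — 4 statements merged into one kernel-verified Lean document; each statement's English description precedes it below -/
import Mathlib

section
/- Let R be a domain that is an elementary divisor ring. Then the following are equivalent: (1) R is a Bézout duo-domain (i.e., R is a duo ring); (2) R satisfies the Lam condition, i.e., RaR = R implies a is a unit; (3) for every a ∈ R, RaR = R implies there exist s, t ∈ R such that sat = 1. -/
/-- A (not necessarily square) matrix `A` over a ring admits diagonal reduction if there are
invertible matrices `P`, `Q` such that `P * A * Q` is a diagonal matrix `(d_ij)` in which each
diagonal entry `d_{i+1,i+1}` is a full divisor of `d_ii`, i.e.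
`R·d_{i+1,i+1}·R ⊆ d_ii·R ∩ R·d_ii`. -/
def AdmitsDiagonalReduction {R : Type*} [Ring R] {m n : ℕ}
    (A : Matrix (Fin m) (Fin n) R) : Prop :=
  ∃ (P : Matrix (Fin m) (Fin m) R) (Q : Matrix (Fin n) (Fin n) R),
    IsUnit P ∧ IsUnit Q ∧
    (∀ (i : Fin m) (j : Fin n), (i : ℕ) ≠ (j : ℕ) → (P * A * Q) i j = 0) ∧
    (∀ (i : Fin m) (j : Fin n) (i' : Fin m) (j' : Fin n),
      (i : ℕ) = (j : ℕ) → (i' : ℕ) = (j' : ℕ) → (i' : ℕ) = (i : ℕ) + 1 →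
      ∀ x y : R,
        (∃ u : R, x * (P * A * Q) i' j' * y = (P * A * Q) i j * u) ∧
        (∃ v : R, x * (P * A * Q) i' j' * y = v * (P * A * Q) i j))

/-- A ring is an elementary divisor ring if every matrix admits a diagonal reduction. -/
def ElementaryDivisorRing (R : Type*) [Ring R] : Prop :=
  ∀ (m n : ℕ) (A : Matrix (Fin m) (Fin n) R), AdmitsDiagonalReduction A

/-- A ring is Bézout if every finitely generated left ideal and every finitely generated
right ideal is principal. (Right ideals are submodules of `R` over `Rᵐᵒᵖ`.) -/
def IsBezoutRing (R : Type*) [Ring R] : Prop :=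
  (∀ I : Ideal R, I.FG → ∃ d : R, I = Ideal.span {d}) ∧
  (∀ I : Submodule Rᵐᵒᵖ R, I.FG → ∃ d : R, I = Submodule.span Rᵐᵒᵖ {d})

/-- A ring is duo if every left ideal and every right ideal is two-sided. -/
def IsDuoRing (R : Type*) [Ring R] : Prop :=
  (∀ (I : Ideal R), ∀ a ∈ I, ∀ r : R, a * r ∈ I) ∧
  (∀ (I : Submodule Rᵐᵒᵖ R), ∀ a ∈ I, ∀ r : R, r * a ∈ I)

/-- A ring is left quasi-duo if every maximal left ideal is two-sided. -/
def IsLeftQuasiDuo (R : Type*) [Ring R] : Prop :=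
  ∀ I : Ideal R, I.IsMaximal → ∀ a ∈ I, ∀ r : R, a * r ∈ I

/-- A ring is right quasi-duo if every maximal right ideal is two-sided. -/
def IsRightQuasiDuo (R : Type*) [Ring R] : Prop :=
  ∀ I : Submodule Rᵐᵒᵖ R, IsCoatom I → ∀ a ∈ I, ∀ r : R, r * a ∈ I

/-- A ring has stable range 1 if `aR + bR = R` implies `a + by` is a unit for some `y`. -/
def HasStableRange1 (R : Type*) [Ring R] : Prop :=
  ∀ a b : R, (∃ x y : R, a * x + b * y = 1) → ∃ y : R, IsUnit (a + b * y)

/-- The quotient ring `R/aR`, where `aR` is regarded as the two-sided ideal generated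
by `a` (in a duo ring this coincides with the right ideal `aR`). -/
abbrev QuotBy {R : Type*} [Ring R] (a : R) : Type _ :=
  (TwoSidedIdeal.span {a}).ringCon.Quotient

/-- The Jacobson radical of `R` (the intersection of all maximal left ideals). -/
noncomputable abbrev jacobsonRadical (R : Type*) [Ring R] : Ideal R :=
  Ideal.jacobson (⊥ : Ideal R)

/-- A two-sided ideal `P` is prime if `P ≠ R` and `aRb ⊆ P` implies `a ∈ P` or `b ∈ P`. -/
def IsPrimeTwoSided {R : Type*} [Ring R] (P : TwoSidedIdeal R) : Prop :=
  P ≠ ⊤ ∧ ∀ a b : R, (∀ r : R, a * r * b ∈ P) → a ∈ P ∨ b ∈ P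

/-- A ring is a PM ring if every prime two-sided ideal is contained in exactly one
maximal (two-sided) ideal. -/
def IsPMRing (R : Type*) [Ring R] : Prop :=
  ∀ P : TwoSidedIdeal R, IsPrimeTwoSided P →
    ∃! M : TwoSidedIdeal R, IsCoatom M ∧ P ≤ M

/-- An element `c` is adequate if for every `a` there are `r, s` with `c = rs`,
`rR + aR = R`, and `s'R + aR ≠ R` for every non-invertible divisor `s'` of `s`. -/
def IsAdequateElement {R : Type*} [Ring R] (c : R) : Prop :=
  ∀ a : R, ∃ r s : R, c = r * s ∧ (∃ x y : R, r * x + a * y = 1) ∧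
    ∀ s' : R, ¬ IsUnit s' → (∃ u : R, s = s' * u) → ¬ ∃ x y : R, s' * x + a * y = 1

/-- An element `c` is feckly adequate if for every `a` there are `r, s` with
`c ≡ rs (mod J(R))`, `rR + aR = R`, and `s'R + aR ≠ R` for every non-invertible
divisor `s'` of `s`. -/
def IsFecklyAdequateElement {R : Type*} [Ring R] (c : R) : Prop :=
  ∀ a : R, ∃ r s : R, c - r * s ∈ jacobsonRadical R ∧ (∃ x y : R, r * x + a * y = 1) ∧
    ∀ s' : R, ¬ IsUnit s' → (∃ u : R, s = s' * u) → ¬ ∃ x y : R, s' * x + a * y = 1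



section EDRHelpers
variable {R : Type*} [Ring R]

variable {R : Type*} [Ring R]

private lemma span_eq_top_of_combo {g p q r s : R} (h : p * g * q + r * g * s = 1) :
    TwoSidedIdeal.span {g} = ⊤ := by
  set I := TwoSidedIdeal.span ({g} : Set R) with hI
  have hg : g ∈ I := TwoSidedIdeal.subset_span rfl
  have h1 : (1 : R) ∈ I := by
    rw [← h]
    exact I.add_mem (I.mul_mem_right _ _ (I.mul_mem_left _ _ hg))
      (I.mul_mem_right _ _ (I.mul_mem_left _ _ hg))
  exact I.eq_top h1

/-- xy = 1 implies yx = 1 in a domain. -/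
private lemma mul_eq_one_symm {R : Type*} [Ring R] [IsDomain R] {x y : R}
    (h : x * y = 1) : y * x = 1 := by
  have hx : x ≠ 0 := by
    rintro rfl
    rw [zero_mul] at h
    exact zero_ne_one h
  have h2 : x * (y * x) = x * 1 := by
    calc x * (y * x) = (x * y) * x := by rw [mul_assoc]
    _ = x := by rw [h, one_mul]
    _ = x * 1 := by rw [mul_one]
  exact mul_left_cancel₀ hx h2


variable {R : Type*} [Ring R]

private lemma inv_pair {m : ℕ} {P : Matrix (Fin m) (Fin m) R} (hP : IsUnit P) :
    ∃ P', P * P' = 1 ∧ P' * P = 1 := by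
  obtain ⟨u, rfl⟩ := hP
  exact ⟨Units.val u⁻¹, Units.mul_inv u, Units.inv_mul u⟩

private lemma sandwich {m n : ℕ} {P P' : Matrix (Fin m) (Fin m) R}
    {Q Q' : Matrix (Fin n) (Fin n) R} (hP'P : P' * P = 1) (hQQ' : Q * Q' = 1)
    (A : Matrix (Fin m) (Fin n) R) : P' * (P * A * Q) * Q' = A := by
  rw [show P * A * Q = P * (A * Q) from Matrix.mul_assoc _ _ _,
    ← Matrix.mul_assoc P' P (A * Q), hP'P, Matrix.one_mul, Matrix.mul_assoc A Q Q', hQQ',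
    Matrix.mul_one]

private lemma pair_right (hEDR : ElementaryDivisorRing R) (α β : R) :
    ∃ c x y x' y', α = c * x ∧ β = c * y ∧ c = α * x' + β * y' := by
  obtain ⟨P, Q, hP, hQ, hdiag, -⟩ := hEDR 1 2 !![α, β]
  obtain ⟨P', hPP', hP'P⟩ := inv_pair hP
  obtain ⟨Q', hQQ', hQ'Q⟩ := inv_pair hQ
  set E := P * !![α, β] * Q with hE
  have hE01 : E 0 1 = 0 := hdiag 0 1 (by decide)
  have hAeq : P' * E * Q' = !![α, β] := sandwich hP'P hQQ' _
  have hα := congrFun (congrFun hAeq 0) 0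
  have hβ := congrFun (congrFun hAeq 0) 1
  have hP1 := congrFun (congrFun hP'P 0) 0
  have hc := congrFun (congrFun hE 0) 0
  simp only [Matrix.mul_apply, Fin.sum_univ_one, Fin.sum_univ_two, hE01, mul_zero, zero_mul,
    add_zero, Matrix.cons_val', Matrix.cons_val_zero, Matrix.cons_val_one, Matrix.head_cons,
    Matrix.empty_val', Matrix.cons_val_fin_one, Matrix.head_fin_const, Matrix.of_apply,
    Matrix.one_apply_eq] at hα hβ hP1 hc
  have key : ∀ z w : R, P' 0 0 * (P 0 0 * z * w) = z * w := fun z w => by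
    rw [← mul_assoc, ← mul_assoc, hP1, one_mul]
  refine ⟨P' 0 0 * E 0 0, Q' 0 0, Q' 0 1, Q 0 0, Q 1 0, hα.symm, hβ.symm, ?_⟩
  rw [hc, mul_add, key, key]

private lemma pair_left (hEDR : ElementaryDivisorRing R) (α β : R) :
    ∃ c x y x' y', α = x * c ∧ β = y * c ∧ c = x' * α + y' * β := by
  obtain ⟨P, Q, hP, hQ, hdiag, -⟩ := hEDR 2 1 !![α; β]
  obtain ⟨P', hPP', hP'P⟩ := inv_pair hP
  obtain ⟨Q', hQQ', hQ'Q⟩ := inv_pair hQ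
  set E := P * !![α; β] * Q with hE
  have hE10 : E 1 0 = 0 := hdiag 1 0 (by decide)
  have hAeq : P' * E * Q' = !![α; β] := sandwich hP'P hQQ' _
  have hα := congrFun (congrFun hAeq 0) 0
  have hβ := congrFun (congrFun hAeq 1) 0
  have hQ1 := congrFun (congrFun hQQ' 0) 0
  have hc := congrFun (congrFun hE 0) 0
  simp only [Matrix.mul_apply, Fin.sum_univ_one, Fin.sum_univ_two, hE10, mul_zero, zero_mul,
    add_zero, Matrix.cons_val', Matrix.cons_val_zero, Matrix.cons_val_one, Matrix.head_cons,
    Matrix.empty_val', Matrix.cons_val_fin_one, Matrix.head_fin_const, Matrix.of_apply,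
    Matrix.one_apply_eq] at hα hβ hQ1 hc
  have key : ∀ z w : R, z * w * Q 0 0 * Q' 0 0 = z * w := fun z w => by
    rw [mul_assoc (z * w), hQ1, mul_one]
  refine ⟨E 0 0 * Q' 0 0, P' 0 0, P' 1 0, P 0 0, P 0 1, ?_, ?_, ?_⟩
  · rw [← mul_assoc]; exact hα.symm
  · rw [← mul_assoc]; exact hβ.symm
  · rw [hc, add_mul, add_mul, key, key]



private lemma span_eq_top_of_combo' {g p q r s : R} (h : p * g * q + r * g * s = 1) :
    TwoSidedIdeal.span {g} = ⊤ := by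
  set I := TwoSidedIdeal.span ({g} : Set R) with hI
  have hg : g ∈ I := TwoSidedIdeal.subset_span rfl
  have h1 : (1 : R) ∈ I := by
    rw [← h]
    exact I.add_mem (I.mul_mem_right _ _ (I.mul_mem_left _ _ hg))
      (I.mul_mem_right _ _ (I.mul_mem_left _ _ hg))
  exact I.eq_top h1

private lemma exists_unit_combo_right (hEDR : ElementaryDivisorRing R)
    (hLam : ∀ a : R, TwoSidedIdeal.span {a} = ⊤ → IsUnit a)
    {α β γ δ : R} (h : γ * α + δ * β = 1) : ∃ w₁ w₂, α * w₁ + β * w₂ = 1 := by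
  obtain ⟨c, x, y, x', y', hα, hβ, hcc⟩ := pair_right hEDR α β
  have hspan : TwoSidedIdeal.span {c} = ⊤ := span_eq_top_of_combo' (g := c)
    (p := γ) (q := x) (r := δ) (s := y)
    (by rw [mul_assoc, mul_assoc, ← hα, ← hβ]; exact h)
  obtain ⟨cu, hcu⟩ := hLam c hspan
  have h1 : c * Units.val cu⁻¹ = 1 := by rw [← hcu]; exact Units.mul_inv cu
  refine ⟨x' * Units.val cu⁻¹, y' * Units.val cu⁻¹, ?_⟩
  calc α * (x' * Units.val cu⁻¹) + β * (y' * Units.val cu⁻¹)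
      = (α * x' + β * y') * Units.val cu⁻¹ := by rw [add_mul, mul_assoc, mul_assoc]
    _ = c * Units.val cu⁻¹ := by rw [← hcc]
    _ = 1 := h1

private lemma exists_unit_combo_left (hEDR : ElementaryDivisorRing R)
    (hLam : ∀ a : R, TwoSidedIdeal.span {a} = ⊤ → IsUnit a)
    {α β γ δ : R} (h : α * γ + β * δ = 1) : ∃ w₁ w₂, w₁ * α + w₂ * β = 1 := by
  obtain ⟨c, x, y, x', y', hα, hβ, hcc⟩ := pair_left hEDR α β
  have hspan : TwoSidedIdeal.span {c} = ⊤ := span_eq_top_of_combo' (g := c)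
    (p := x) (q := γ) (r := y) (s := δ)
    (by rw [← hα, ← hβ]; exact h)
  obtain ⟨cu, hcu⟩ := hLam c hspan
  have h1 : Units.val cu⁻¹ * c = 1 := by rw [← hcu]; exact Units.inv_mul cu
  refine ⟨Units.val cu⁻¹ * x', Units.val cu⁻¹ * y', ?_⟩
  calc Units.val cu⁻¹ * x' * α + Units.val cu⁻¹ * y' * β
      = Units.val cu⁻¹ * (x' * α + y' * β) := by rw [mul_add, mul_assoc, mul_assoc]
    _ = Units.val cu⁻¹ * c := by rw [← hcc]
    _ = 1 := h1

private lemma duo_pair (hEDR : ElementaryDivisorRing R)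
    (hLam : ∀ a : R, TwoSidedIdeal.span {a} = ⊤ → IsUnit a) (a t : R) :
    (∃ r, t * a = a * r) ∧ (∃ r, a * t = r * a) := by
  obtain ⟨P, Q, hP, hQ, hdiag, hfull⟩ := hEDR 2 2 !![a, 0; 0, a]
  obtain ⟨P', hPP', hP'P⟩ := inv_pair hP
  obtain ⟨Q', hQQ', hQ'Q⟩ := inv_pair hQ
  set E := P * !![a, 0; 0, a] * Q with hE
  have hE10 : E 1 0 = 0 := hdiag 1 0 (by decide)
  have hE01 : E 0 1 = 0 := hdiag 0 1 (by decide)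
  have hfull' := hfull 0 0 1 1 rfl rfl (by decide)
  have hPA : P * !![a, 0; 0, a] = E * Q' := by
    rw [hE, Matrix.mul_assoc (P * !![a, 0; 0, a]) Q Q', hQQ', Matrix.mul_one]
  have hAQ : !![a, 0; 0, a] * Q = P' * E := by
    rw [hE, show P * !![a, 0; 0, a] * Q = P * (!![a, 0; 0, a] * Q) from
      Matrix.mul_assoc _ _ _, ← Matrix.mul_assoc P' P _, hP'P, Matrix.one_mul]
  -- scalar identities
  have h1j : ∀ j : Fin 2, P 1 j * a = E 1 1 * Q' 1 j := by
    intro j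
    have h0 := congrFun (congrFun hPA 1) j
    fin_cases j <;>
      simpa [Matrix.mul_apply, Fin.sum_univ_two, hE10, Matrix.cons_val_zero,
        Matrix.cons_val_one, Matrix.head_cons, Matrix.of_apply, Matrix.cons_val'] using h0
  have h0j : ∀ j : Fin 2, E 0 0 * Q' 0 j = P 0 j * a := by
    intro j
    have h0 := congrFun (congrFun hPA 0) j
    fin_cases j <;>
      simpa [Matrix.mul_apply, Fin.sum_univ_two, hE01, Matrix.cons_val_zero,
        Matrix.cons_val_one, Matrix.head_cons, Matrix.of_apply, Matrix.cons_val'] using h0.symm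
  have hQi0 : ∀ i : Fin 2, a * Q i 0 = P' i 0 * E 0 0 := by
    intro i
    have h0 := congrFun (congrFun hAQ i) 0
    fin_cases i <;>
      simpa [Matrix.mul_apply, Fin.sum_univ_two, hE10, Matrix.cons_val_zero,
        Matrix.cons_val_one, Matrix.head_cons, Matrix.of_apply, Matrix.cons_val'] using h0
  have hQi1 : ∀ i : Fin 2, a * Q i 1 = P' i 1 * E 1 1 := by
    intro i
    have h0 := congrFun (congrFun hAQ i) 1
    fin_cases i <;>
      simpa [Matrix.mul_apply, Fin.sum_univ_two, hE01, Matrix.cons_val_zero,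
        Matrix.cons_val_one, Matrix.head_cons, Matrix.of_apply, Matrix.cons_val'] using h0
  -- unimodularity
  have hPP'00 : P 0 0 * P' 0 0 + P 0 1 * P' 1 0 = 1 := by
    have h0 := congrFun (congrFun hPP' 0) 0
    simpa [Matrix.mul_apply, Fin.sum_univ_two, Matrix.one_apply] using h0
  have hPP'11 : P 1 0 * P' 0 1 + P 1 1 * P' 1 1 = 1 := by
    have h0 := congrFun (congrFun hPP' 1) 1
    simpa [Matrix.mul_apply, Fin.sum_univ_two, Matrix.one_apply] using h0
  have hQ'Q00 : Q' 0 0 * Q 0 0 + Q' 0 1 * Q 1 0 = 1 := by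
    have h0 := congrFun (congrFun hQ'Q 0) 0
    simpa [Matrix.mul_apply, Fin.sum_univ_two, Matrix.one_apply] using h0
  have hQ'Q11 : Q' 1 0 * Q 0 1 + Q' 1 1 * Q 1 1 = 1 := by
    have h0 := congrFun (congrFun hQ'Q 1) 1
    simpa [Matrix.mul_apply, Fin.sum_univ_two, Matrix.one_apply] using h0
  constructor
  · -- t * a ∈ aR
    have keyA : ∀ (x : R) (i j : Fin 2), ∃ r, P' i 0 * x * (P 1 j * a) = a * r := by
      intro x i j
      obtain ⟨uu, huu⟩ := (hfull' x (Q' 1 j)).1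
      refine ⟨Q i 0 * uu, ?_⟩
      calc P' i 0 * x * (P 1 j * a) = P' i 0 * (x * E 1 1 * Q' 1 j) := by
            rw [h1j j]; noncomm_ring
        _ = P' i 0 * (E 0 0 * uu) := by rw [huu]
        _ = (P' i 0 * E 0 0) * uu := by rw [mul_assoc]
        _ = (a * Q i 0) * uu := by rw [hQi0 i]
        _ = a * (Q i 0 * uu) := by rw [mul_assoc]
    obtain ⟨w₁, w₂, hw⟩ := exists_unit_combo_right hEDR hLam hPP'00
    obtain ⟨σ₁, σ₂, hσ⟩ := exists_unit_combo_left hEDR hLam hPP'11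
    have lift : ∀ (z : R) (j : Fin 2), ∃ r, z * (P 1 j * a) = a * r := by
      intro z j
      obtain ⟨r₁, hr₁⟩ := keyA (w₁ * z) 0 j
      obtain ⟨r₂, hr₂⟩ := keyA (w₂ * z) 1 j
      refine ⟨r₁ + r₂, ?_⟩
      calc z * (P 1 j * a)
          = (P' 0 0 * w₁ + P' 1 0 * w₂) * z * (P 1 j * a) := by rw [hw, one_mul]
        _ = P' 0 0 * (w₁ * z) * (P 1 j * a) + P' 1 0 * (w₂ * z) * (P 1 j * a) := by
            noncomm_ring
        _ = a * r₁ + a * r₂ := by rw [hr₁, hr₂]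
        _ = a * (r₁ + r₂) := by rw [mul_add]
    obtain ⟨r₁, hr₁⟩ := lift (t * σ₁) 0
    obtain ⟨r₂, hr₂⟩ := lift (t * σ₂) 1
    refine ⟨r₁ + r₂, ?_⟩
    calc t * a = t * (σ₁ * P 1 0 + σ₂ * P 1 1) * a := by rw [hσ, mul_one]
      _ = t * σ₁ * (P 1 0 * a) + t * σ₂ * (P 1 1 * a) := by noncomm_ring
      _ = a * r₁ + a * r₂ := by rw [hr₁, hr₂]
      _ = a * (r₁ + r₂) := by rw [mul_add]
  · -- a * t ∈ Ra
    have keyB : ∀ (x : R) (i j : Fin 2), ∃ r, (a * Q i 1) * x * Q' 0 j = r * a := by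
      intro x i j
      obtain ⟨vv, hvv⟩ := (hfull' 1 x).2
      rw [one_mul] at hvv
      refine ⟨P' i 1 * vv * P 0 j, ?_⟩
      calc (a * Q i 1) * x * Q' 0 j = P' i 1 * (E 1 1 * x) * Q' 0 j := by
            rw [hQi1 i]; noncomm_ring
        _ = P' i 1 * (vv * E 0 0) * Q' 0 j := by rw [hvv]
        _ = (P' i 1 * vv) * (E 0 0 * Q' 0 j) := by noncomm_ring
        _ = (P' i 1 * vv) * (P 0 j * a) := by rw [h0j j]
        _ = P' i 1 * vv * P 0 j * a := by noncomm_ring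
    obtain ⟨w₁, w₂, hw⟩ := exists_unit_combo_right hEDR hLam hQ'Q11
    obtain ⟨σ₁, σ₂, hσ⟩ := exists_unit_combo_left hEDR hLam hQ'Q00
    have lift : ∀ (z : R) (j : Fin 2), ∃ r, a * (z * Q' 0 j) = r * a := by
      intro z j
      obtain ⟨r₁, hr₁⟩ := keyB (w₁ * z) 0 j
      obtain ⟨r₂, hr₂⟩ := keyB (w₂ * z) 1 j
      refine ⟨r₁ + r₂, ?_⟩
      calc a * (z * Q' 0 j)
          = a * ((Q 0 1 * w₁ + Q 1 1 * w₂) * z * Q' 0 j) := by rw [hw, one_mul]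
        _ = (a * Q 0 1) * (w₁ * z) * Q' 0 j + (a * Q 1 1) * (w₂ * z) * Q' 0 j := by
            noncomm_ring
        _ = r₁ * a + r₂ * a := by rw [hr₁, hr₂]
        _ = (r₁ + r₂) * a := by rw [add_mul]
    obtain ⟨r₁, hr₁⟩ := lift (t * σ₁) 0
    obtain ⟨r₂, hr₂⟩ := lift (t * σ₂) 1
    refine ⟨r₁ + r₂, ?_⟩
    calc a * t = a * (t * (σ₁ * Q' 0 0 + σ₂ * Q' 0 1)) := by rw [hσ, mul_one]
      _ = a * (t * σ₁ * Q' 0 0) + a * (t * σ₂ * Q' 0 1) := by noncomm_ring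
      _ = r₁ * a + r₂ * a := by rw [hr₁, hr₂]
      _ = (r₁ + r₂) * a := by rw [add_mul]



private lemma bezout_left (hEDR : ElementaryDivisorRing R) :
    ∀ I : Ideal R, I.FG → ∃ d : R, I = Ideal.span {d} := by
  have main : ∀ S : Finset R, ∃ d : R, Ideal.span (S : Set R) = Ideal.span {d} := by
    intro S
    classical
    induction S using Finset.induction_on with
    | empty => exact ⟨0, by rw [Finset.coe_empty, Ideal.span_empty,
        show Ideal.span {(0:R)} = ⊥ from Submodule.span_zero_singleton R]⟩
    | @insert a S ha ih =>
      obtain ⟨d, hd⟩ := ih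
      obtain ⟨c, x, y, x', y', hα, hβ, hcc⟩ := pair_left hEDR a d
      refine ⟨c, ?_⟩
      rw [Finset.coe_insert, Ideal.span_insert, hd, ← Ideal.span_insert]
      apply le_antisymm
      · rw [Ideal.span_le]
        rintro z (rfl | rfl)
        · exact Submodule.mem_span_singleton.2 ⟨x, by rw [smul_eq_mul]; exact hα.symm⟩
        · exact Submodule.mem_span_singleton.2 ⟨y, by rw [smul_eq_mul]; exact hβ.symm⟩
      · rw [Ideal.span_le]
        rintro z rfl
        rw [hcc]
        exact Submodule.add_mem _
          (Submodule.smul_mem _ x' (Submodule.subset_span (Set.mem_insert _ _)))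
          (Submodule.smul_mem _ y' (Submodule.subset_span
            (Set.mem_insert_of_mem _ rfl)))
  intro I hI
  obtain ⟨S, hS⟩ := hI
  obtain ⟨d, hd⟩ := main S
  exact ⟨d, by rw [← hS, hd]⟩

private lemma bezout_right (hEDR : ElementaryDivisorRing R) :
    ∀ I : Submodule Rᵐᵒᵖ R, I.FG → ∃ d : R, I = Submodule.span Rᵐᵒᵖ {d} := by
  have main : ∀ S : Finset R, ∃ d : R,
      Submodule.span Rᵐᵒᵖ (S : Set R) = Submodule.span Rᵐᵒᵖ {d} := by
    intro S
    classical
    induction S using Finset.induction_on with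
    | empty => exact ⟨0, by rw [Finset.coe_empty, Submodule.span_empty,
        Submodule.span_zero_singleton Rᵐᵒᵖ]⟩
    | @insert a S ha ih =>
      obtain ⟨d, hd⟩ := ih
      obtain ⟨c, x, y, x', y', hα, hβ, hcc⟩ := pair_right hEDR a d
      refine ⟨c, ?_⟩
      rw [Finset.coe_insert, Submodule.span_insert, hd, ← Submodule.span_insert]
      apply le_antisymm
      · rw [Submodule.span_le]
        rintro z (rfl | rfl)
        · exact Submodule.mem_span_singleton.2
            ⟨MulOpposite.op x, by rw [op_smul_eq_mul]; exact hα.symm⟩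
        · exact Submodule.mem_span_singleton.2
            ⟨MulOpposite.op y, by rw [op_smul_eq_mul]; exact hβ.symm⟩
      · rw [Submodule.span_le]
        rintro z rfl
        rw [hcc]
        refine Submodule.add_mem _ ?_ ?_
        · have := Submodule.smul_mem (Submodule.span Rᵐᵒᵖ (insert a {d}))
            (MulOpposite.op x') (Submodule.subset_span (Set.mem_insert a {d}))
          rwa [op_smul_eq_mul] at this
        · have := Submodule.smul_mem (Submodule.span Rᵐᵒᵖ (insert a {d}))
            (MulOpposite.op y') (Submodule.subset_span
              (Set.mem_insert_of_mem a rfl))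
          rwa [op_smul_eq_mul] at this
  intro I hI
  obtain ⟨S, hS⟩ := hI
  obtain ⟨d, hd⟩ := main S
  exact ⟨d, by rw [← hS, hd]⟩

private lemma duo_of_lam (hEDR : ElementaryDivisorRing R)
    (hLam : ∀ a : R, TwoSidedIdeal.span {a} = ⊤ → IsUnit a) : IsDuoRing R := by
  constructor
  · intro I a ha r
    obtain ⟨z, hz⟩ := (duo_pair hEDR hLam a r).2
    have := Submodule.smul_mem I z ha
    rwa [smul_eq_mul, ← hz] at this
  · intro I a ha r
    obtain ⟨z, hz⟩ := (duo_pair hEDR hLam a r).1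
    have := Submodule.smul_mem I (MulOpposite.op z) ha
    rwa [op_smul_eq_mul, ← hz] at this

private lemma lam_of_duo (hduo : IsDuoRing R) :
    ∀ a : R, TwoSidedIdeal.span {a} = ⊤ → IsUnit a := by
  intro a hspan
  -- left ideal span {a} is two-sided
  have h1 : (1 : R) ∈ Ideal.span ({a} : Set R) := by
    let J : TwoSidedIdeal R := TwoSidedIdeal.mk' (Ideal.span ({a} : Set R))
      (Submodule.zero_mem _) (fun hx hy => Submodule.add_mem _ hx hy)
      (fun hx => Submodule.neg_mem _ hx)
      (fun {x y} hy => by simpa [smul_eq_mul] using Submodule.smul_mem _ x hy)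
      (fun {x y} hx => hduo.1 _ x hx y)
    have haJ : ({a} : Set R) ⊆ (J : Set R) := by
      intro z hz
      rcases hz with rfl
      simp only [J, SetLike.mem_coe, TwoSidedIdeal.mem_mk']
      exact Submodule.subset_span rfl
    have h1J : (1 : R) ∈ J := by
      have : (1 : R) ∈ TwoSidedIdeal.span ({a} : Set R) := by rw [hspan]; trivial
      exact TwoSidedIdeal.mem_span_iff.1 this J haJ
    simpa only [J, TwoSidedIdeal.mem_mk', SetLike.mem_coe] using h1J
  have h2 : (1 : R) ∈ Submodule.span Rᵐᵒᵖ ({a} : Set R) := by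
    let J : TwoSidedIdeal R := TwoSidedIdeal.mk' (Submodule.span Rᵐᵒᵖ ({a} : Set R))
      (Submodule.zero_mem _) (fun hx hy => Submodule.add_mem _ hx hy)
      (fun hx => Submodule.neg_mem _ hx)
      (fun {x y} hy => hduo.2 _ y hy x)
      (fun {x y} hx => by
        simpa [op_smul_eq_mul] using Submodule.smul_mem _ (MulOpposite.op y) hx)
    have haJ : ({a} : Set R) ⊆ (J : Set R) := by
      intro z hz
      rcases hz with rfl
      simp only [J, SetLike.mem_coe, TwoSidedIdeal.mem_mk']
      exact Submodule.subset_span rfl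
    have h1J : (1 : R) ∈ J := by
      have : (1 : R) ∈ TwoSidedIdeal.span ({a} : Set R) := by rw [hspan]; trivial
      exact TwoSidedIdeal.mem_span_iff.1 this J haJ
    simpa only [J, TwoSidedIdeal.mem_mk', SetLike.mem_coe] using h1J
  obtain ⟨r, hr⟩ := Submodule.mem_span_singleton.1 h1
  obtain ⟨s, hs⟩ := Submodule.mem_span_singleton.1 h2
  rw [smul_eq_mul] at hr
  have hs' : a * MulOpposite.unop s = 1 := by
    rw [← op_smul_eq_mul, MulOpposite.op_unop]; exact hs
  clear hs
  have hs := hs'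
  have hrs : r = MulOpposite.unop s := by
    calc r = r * (a * MulOpposite.unop s) := by rw [hs, mul_one]
    _ = (r * a) * MulOpposite.unop s := by rw [mul_assoc]
    _ = MulOpposite.unop s := by rw [hr, one_mul]
  exact ⟨⟨a, r, by rw [hrs]; exact hs, hr⟩, rfl⟩


end EDRHelpers

/-- For a domain `R` that is an elementary divisor ring, the following are
equivalent: (1) `R` is a Bézout duo-domain; (2) `R` satisfies the Lam condition
(`RaR = R` implies `a` is a unit); (3) `RaR = R` implies `sat = 1` for some `s, t`. -/
theorem stmt2 (R : Type*) [Ring R] [IsDomain R] (hEDR : ElementaryDivisorRing R) :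
    List.TFAE
      [IsBezoutRing R ∧ IsDuoRing R,
       ∀ a : R, TwoSidedIdeal.span {a} = ⊤ → IsUnit a,
       ∀ a : R, TwoSidedIdeal.span {a} = ⊤ → ∃ s t : R, s * a * t = 1] := by
  tfae_have 1 → 2 := fun h => lam_of_duo h.2
  tfae_have 2 → 1 := fun h => ⟨⟨bezout_left hEDR, bezout_right hEDR⟩, duo_of_lam hEDR h⟩
  tfae_have 2 → 3 := by
    intro h a hspan
    obtain ⟨u, rfl⟩ := h a hspan
    exact ⟨Units.val u⁻¹, 1, by rw [mul_one]; exact Units.inv_mul u⟩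
  tfae_have 3 → 2 := by
    intro h a hspan
    obtain ⟨s, t, hst⟩ := h a hspan
    have h1 : t * (s * a) = 1 := _root_.mul_eq_one_symm hst
    have h2 : (t * s) * a = 1 := by rw [mul_assoc]; exact h1
    have h3 : s * (a * t) = 1 := by rw [← mul_assoc]; exact hst
    have h4 : (a * t) * s = 1 := _root_.mul_eq_one_symm h3
    have h5 : a * (t * s) = 1 := by rw [← mul_assoc]; exact h4
    exact ⟨⟨a, t * s, h5, h2⟩, rfl⟩
  tfae_finish
end

section
/- Let R be a Bézout domain. If p, q ∈ R satisfy pR + qR = R, then there exists an invertible 2×2 matrix over R whose first row is (p, q). -/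
/-- In a Bézout domain, if `pR + qR = R` then `(p, q)` is the first row
of some invertible `2 × 2` matrix. -/
theorem stmt8 (R : Type*) [Ring R] [IsDomain R] (hB : IsBezoutRing R)
    (p q : R) (h : ∃ x y : R, p * x + q * y = 1) :
    ∃ U : Matrix (Fin 2) (Fin 2) R, IsUnit U ∧ U 0 0 = p ∧ U 0 1 = q := by
  obtain ⟨x, y, hxy⟩ := h
  by_cases hq : q = 0
  · subst hq
    rw [zero_mul, add_zero] at hxy
    have hx0 : x ≠ 0 := fun h0 => by simp [h0] at hxy
    have hxp : x * p = 1 := by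
      have h2 : x * (p * x) = x := by rw [hxy, mul_one]
      have h1 : (x * p - 1) * x = 0 := by
        rw [sub_mul, one_mul, mul_assoc, h2, sub_self]
      rcases mul_eq_zero.mp h1 with h | h
      · exact sub_eq_zero.mp h
      · exact absurd h hx0
    refine ⟨!![p, 0; 0, 1], ⟨⟨_, !![x, 0; 0, 1], ?_, ?_⟩, rfl⟩, by simp, by simp⟩
    · ext i j; fin_cases i <;> fin_cases j <;>
        simp [Matrix.mul_apply, Fin.sum_univ_two, hxy]
    · ext i j; fin_cases i <;> fin_cases j <;>
        simp [Matrix.mul_apply, Fin.sum_univ_two, hxp]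
  · -- main case q ≠ 0
    obtain ⟨e, hI⟩ := hB.2 (Submodule.span Rᵐᵒᵖ {1 - x*p, x*q})
      (Submodule.fg_span (Set.toFinite _))
    have he : e ∈ Submodule.span Rᵐᵒᵖ ({1 - x*p, x*q} : Set R) := by
      rw [hI]; exact Submodule.mem_span_singleton_self e
    obtain ⟨s', t', hst'⟩ := Submodule.mem_span_pair.mp he
    set s := s'.unop with hs
    set t := t'.unop with ht
    have hst : (1 - x*p) * s + (x*q) * t = e := by
      rw [← hst', MulOpposite.smul_eq_mul_unop, MulOpposite.smul_eq_mul_unop]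
    set f := -(y*p*s + t - y*q*t) with hf
    have hpe : p * e + q * f = 0 := by
      rw [← hst, hf]
      have key : p * ((1 - x*p) * s + (x*q) * t) + q * (-(y*p*s + t - y*q*t))
          = (1 - (p*x + q*y)) * (p*s - q*t) := by noncomm_ring
      rw [key, hxy, sub_self, zero_mul]
    have hmem : ∀ z ∈ ({1 - x*p, x*q} : Set R), ∃ c : R, e * c = z := by
      intro z hz
      have : z ∈ Submodule.span Rᵐᵒᵖ ({e} : Set R) := by
        rw [← hI]; exact Submodule.subset_span hz
      obtain ⟨c', hc'⟩ := Submodule.mem_span_singleton.mp this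
      exact ⟨c'.unop, by rw [← hc', MulOpposite.smul_eq_mul_unop]⟩
    obtain ⟨c, hce⟩ := hmem (1 - x*p) (by simp)
    obtain ⟨d0, hd0⟩ := hmem (x*q) (by simp)
    set d := -d0 with hd
    have hde : e * d = -(x*q) := by rw [hd, mul_neg, hd0]
    have he0 : e ≠ 0 := by
      intro h0
      rw [h0, zero_mul] at hce hd0
      have hxp1 : (1 : R) = x * p := sub_eq_zero.mp hce.symm
      have hx0 : x ≠ 0 := left_ne_zero_of_mul_eq_one hxp1.symm
      rcases mul_eq_zero.mp hd0.symm with hh | hh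
      · exact hx0 hh
      · exact hq hh
    have hqf : q * f = -(p * e) := (neg_eq_of_add_eq_zero_right hpe).symm
    have hqy : q * y = 1 - p * x := eq_sub_of_add_eq' hxy
    have hpx : p * x = 1 - q * y := eq_sub_of_add_eq hxy
    have hfc : f * c = -(y * p) := by
      apply mul_left_cancel₀ hq
      calc q * (f * c) = (q * f) * c := by rw [mul_assoc]
        _ = -(p * (e * c)) := by rw [hqf]; noncomm_ring
        _ = -(p * (1 - x*p)) := by rw [hce]
        _ = -((1 - p*x) * p) := by noncomm_ring
        _ = -((q*y) * p) := by rw [hqy]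
        _ = q * (-(y * p)) := by noncomm_ring
    have hfd : f * d = 1 - y * q := by
      apply mul_left_cancel₀ hq
      calc q * (f * d) = (q * f) * d := by rw [mul_assoc]
        _ = -(p * (e * d)) := by rw [hqf]; noncomm_ring
        _ = -(p * (-(x*q))) := by rw [hde]
        _ = (p*x) * q := by noncomm_ring
        _ = (1 - q*y) * q := by rw [hpx]
        _ = q * (1 - y * q) := by noncomm_ring
    have hcx : c * x + d * y = 0 := by
      apply mul_left_cancel₀ he0
      calc e * (c * x + d * y) = (e*c) * x + (e*d) * y := by noncomm_ring
        _ = (1 - x*p) * x + (-(x*q)) * y := by rw [hce, hde]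
        _ = x - x * (p*x + q*y) := by noncomm_ring
        _ = e * 0 := by rw [hxy, mul_one, sub_self, mul_zero]
    have hcedf : c * e + d * f = 1 := by
      apply mul_left_cancel₀ he0
      calc e * (c * e + d * f) = (e*c) * e + (e*d) * f := by noncomm_ring
        _ = (1 - x*p) * e + (-(x*q)) * f := by rw [hce, hde]
        _ = e - x * (p*e + q*f) := by noncomm_ring
        _ = e * 1 := by rw [hpe, mul_zero, sub_zero, mul_one]
    refine ⟨!![p, q; c, d], ⟨⟨_, !![x, e; y, f], ?_, ?_⟩, rfl⟩, by simp, by simp⟩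
    · ext i j; fin_cases i <;> fin_cases j <;>
        simp [Matrix.mul_apply, Fin.sum_univ_two, hxy, hpe, hcx, hcedf]
    · have h1 : x*p + e*c = 1 := by rw [hce]; noncomm_ring
      have h2 : x*q + e*d = 0 := by rw [hde]; abel
      have h3 : y*p + f*c = 0 := by rw [hfc]; abel
      have h4 : y*q + f*d = 1 := by rw [hfd]; noncomm_ring
      ext i j; fin_cases i <;> fin_cases j <;>
        simp [Matrix.mul_apply, Fin.sum_univ_two, h1, h2, h3, h4]
end

section
/- Let R be a Bézout duo-domain such that whenever aR + bR = R there exist x, y ∈ R with xR + yR = R, xy ∈ J(R), x ∈ aR, and y ∈ bR. Then R is an elementary divisor ring. -/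
namespace Stmt11
open Matrix

variable {R : Type*} [Ring R]

theorem isUnit_one_sub_swap {a b : R} (h : IsUnit (1 - a*b)) : IsUnit (1 - b*a) := by
  obtain ⟨u, hu1, hu2⟩ := isUnit_iff_exists.mp h
  have key1 : a*b*u = u - 1 := by
    have h1 : u - a*b*u = 1 := by
      have := hu1
      calc u - a*b*u = (1 - a*b)*u := by noncomm_ring
        _ = 1 := hu1
    rw [← h1]; abel
  have key2 : u*(a*b) = u - 1 := by
    have h1 : u - u*(a*b) = 1 := by
      calc u - u*(a*b) = u*(1 - a*b) := by noncomm_ring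
        _ = 1 := hu2
    rw [← h1]; abel
  refine isUnit_iff_exists.mpr ⟨1 + b*u*a, ?_, ?_⟩
  · calc (1 - b*a) * (1 + b*u*a) = 1 + b*u*a - b*a - b*(a*b*u)*a := by noncomm_ring
      _ = 1 + b*u*a - b*a - b*(u-1)*a := by rw [key1]
      _ = 1 := by noncomm_ring
  · calc (1 + b*u*a) * (1 - b*a) = 1 + b*u*a - b*a - b*(u*(a*b))*a := by noncomm_ring
      _ = 1 + b*u*a - b*a - b*(u-1)*a := by rw [key2]
      _ = 1 := by noncomm_ring

theorem unit_of_right_inv [IsDomain R] {c y : R} (hcy : c * y = 1) : IsUnit c := by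
  have hc0 : c ≠ 0 := by
    intro h; rw [h, zero_mul] at hcy; exact one_ne_zero hcy.symm
  have h2 : c * (y*c - 1) = 0 := by
    calc c * (y*c - 1) = (c*y)*c - c := by noncomm_ring
      _ = 0 := by rw [hcy]; simp
  rcases mul_eq_zero.mp h2 with h | h
  · exact absurd h hc0
  · have : y * c = 1 := by rwa [sub_eq_zero] at h
    exact isUnit_iff_exists.mpr ⟨y, hcy, this⟩

theorem unit_of_left_inv [IsDomain R] {c y : R} (hcy : y * c = 1) : IsUnit c := by
  have hc0 : c ≠ 0 := by
    intro h; rw [h, mul_zero] at hcy; exact one_ne_zero hcy.symm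
  have h2 : (c*y - 1) * c = 0 := by
    calc (c*y - 1) * c = c*(y*c) - c := by noncomm_ring
      _ = 0 := by rw [hcy]; simp
  rcases mul_eq_zero.mp h2 with h | h
  · have : c * y = 1 := by rwa [sub_eq_zero] at h
    exact isUnit_iff_exists.mpr ⟨y, this, hcy⟩
  · exact absurd h hc0

theorem duo_flipL (hD : IsDuoRing R) (a r : R) : ∃ r', r * a = a * r' := by
  have ha : a ∈ Submodule.span Rᵐᵒᵖ {a} := Submodule.mem_span_singleton_self a
  have h2 := hD.2 _ a ha r
  rw [Submodule.mem_span_singleton] at h2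
  obtain ⟨c, hc⟩ := h2
  exact ⟨c.unop, by rw [← hc, MulOpposite.smul_eq_mul_unop]⟩

theorem duo_flipR (hD : IsDuoRing R) (a r : R) : ∃ r', a * r = r' * a := by
  have ha : a ∈ Ideal.span {a} := Submodule.mem_span_singleton_self a
  have h2 := hD.1 _ a ha r
  rw [Ideal.span, Submodule.mem_span_singleton] at h2
  obtain ⟨c, hc⟩ := h2
  exact ⟨c, by rw [← hc, smul_eq_mul]⟩

theorem J_left_inv {x : R} (hx : x ∈ jacobsonRadical R) : ∃ u, u * (1 - x) = 1 := by
  by_cases h1 : Ideal.span {(1 - x : R)} = ⊤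
  · have : (1:R) ∈ Ideal.span {(1-x : R)} := h1 ▸ Submodule.mem_top
    rw [Ideal.span, Submodule.mem_span_singleton] at this
    obtain ⟨c, hc⟩ := this
    exact ⟨c, by rwa [smul_eq_mul] at hc⟩
  · exfalso
    obtain ⟨M, hMmax, hM⟩ := Ideal.exists_le_maximal _ h1
    have hxM : x ∈ M := by
      have := Ideal.mem_sInf.mp hx (show M ∈ {J : Ideal R | ⊥ ≤ J ∧ J.IsMaximal} from ⟨bot_le, hMmax⟩)
      exact this
    have h1x : (1 - x : R) ∈ M := hM (Submodule.mem_span_singleton_self _)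
    have : (1:R) ∈ M := by
      have := M.add_mem h1x hxM; simpa using this
    exact hMmax.ne_top (Ideal.eq_top_iff_one M |>.mpr this)

theorem J_isUnit_one_sub {x : R} (hx : x ∈ jacobsonRadical R) : IsUnit (1 - x) := by
  obtain ⟨u, hu⟩ := J_left_inv hx
  have hu' : u = 1 + u*x := by
    have h1 : u - u*x = 1 := by
      calc u - u*x = u*(1-x) := by noncomm_ring
        _ = 1 := hu
    rw [sub_eq_iff_eq_add] at h1; exact h1
  have hux : -(u * x) ∈ jacobsonRadical R := neg_mem (Ideal.mul_mem_left _ u hx)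
  obtain ⟨w, hw⟩ := J_left_inv hux
  have hwu : w * u = 1 := by
    rw [hu']
    calc w * (1 + u*x) = w * (1 - -(u*x)) := by noncomm_ring
      _ = 1 := hw
  have h1x : (1 - x) = w := by
    calc (1-x) = (w*u)*(1-x) := by rw [hwu]; simp
      _ = w * (u * (1-x)) := by rw [mul_assoc]
      _ = w := by rw [hu, mul_one]
  exact isUnit_iff_exists.mpr ⟨u, by rw [h1x, hwu], hu⟩

theorem mem_J_of_unit {x : R} (hx : ∀ r : R, IsUnit (1 - r*x)) : x ∈ jacobsonRadical R := by
  refine Ideal.mem_sInf.mpr ?_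
  rintro M ⟨-, hMmax⟩
  by_contra hxM
  have hsup : M ⊔ Ideal.span {x} = ⊤ := by
    refine hMmax.1.2 _ (lt_of_le_of_ne le_sup_left ?_)
    intro e
    exact hxM (e ▸ Submodule.mem_sup_right (Submodule.mem_span_singleton_self x))
  have h1 : (1:R) ∈ M ⊔ Ideal.span {x} := hsup ▸ Submodule.mem_top
  obtain ⟨m, hm, yy, hy, hmy⟩ := Submodule.mem_sup.mp h1
  rw [Ideal.span, Submodule.mem_span_singleton] at hy
  obtain ⟨c, hc⟩ := hy
  have hm' : m = 1 - c*x := by rw [← hmy, ← hc, smul_eq_mul]; abel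
  have : IsUnit m := hm' ▸ hx c
  exact hMmax.ne_top (M.eq_top_of_isUnit_mem hm this)

theorem J_swap (hD : IsDuoRing R) {s t : R} (hst : s*t ∈ jacobsonRadical R) :
    t*s ∈ jacobsonRadical R := by
  apply mem_J_of_unit
  intro r
  obtain ⟨k, hk⟩ := duo_flipL hD t r
  have hmem : s*(r*t) ∈ jacobsonRadical R := by
    rw [hk, ← mul_assoc]
    exact hD.1 _ _ hst k
  have h1 : IsUnit (1 - s*(r*t)) := J_isUnit_one_sub hmem
  have h2 := isUnit_one_sub_swap h1
  have : (r*t)*s = r*(t*s) := by rw [mul_assoc]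
  rwa [this] at h2


/-- Key hypothesis abbreviation -/
def HypH (R : Type*) [Ring R] : Prop :=
  ∀ a b : R, (∃ x y : R, a * x + b * y = 1) →
      ∃ x y : R, (∃ u v : R, x * u + y * v = 1) ∧ x * y ∈ jacobsonRadical R ∧
        (∃ u : R, x = a * u) ∧ (∃ v : R, y = b * v)

/-- Stable range 1 from the hypothesis. -/
theorem sr1 [IsDomain R] (hD : IsDuoRing R) (h : HypH R) {a b : R}
    (hab : ∃ x y : R, a*x + b*y = 1) : ∃ z, IsUnit (a + b*z) := by
  obtain ⟨s, t, ⟨p, q, hpq⟩, hJ, ⟨u, hu⟩, ⟨v, hv⟩⟩ := h a b hab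
  -- s*p + t*q = 1, s*t ∈ J, s = a*u, t = b*v
  refine ⟨v*(q*(1-a)), ?_⟩
  set e : R := a*u*p with he
  have hsp : s*p = e := by rw [hu, he]
  have hf : t*q = 1 - e := by rw [← hsp, eq_sub_iff_add_eq]; rw [add_comm] at hpq; exact hpq
  set c : R := a + b*(v*(q*(1-a))) with hcdef
  have hc : c = (1 - e) + e*a := by
    rw [hcdef]
    have h1 : b*(v*(q*(1-a))) = t*(q*(1-a)) := by rw [hv, mul_assoc]
    rw [h1]
    have h2 : t*(q*(1-a)) = (t*q)*(1-a) := by rw [mul_assoc]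
    rw [h2, hf]
    noncomm_ring
  set c'' : R := (1 - e) + u*(p*e) with hc''
  -- J memberships
  have hts : t*s ∈ jacobsonRadical R := J_swap hD hJ
  have m1 : (1-e)*e ∈ jacobsonRadical R := by
    rw [← hf, ← hsp]
    obtain ⟨k, hk⟩ := duo_flipL hD s q
    have : t*q*(s*p) = (t*s)*(k*p) := by
      calc t*q*(s*p) = t*(q*s)*p := by noncomm_ring
        _ = t*(s*k)*p := by rw [hk]
        _ = (t*s)*(k*p) := by noncomm_ring
    rw [this]; exact hD.1 _ _ hts _
  have m2 : e*(1-e) ∈ jacobsonRadical R := by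
    rw [← hf, ← hsp]
    obtain ⟨k, hk⟩ := duo_flipL hD t p
    have : (s*p)*(t*q) = (s*t)*(k*q) := by
      calc (s*p)*(t*q) = s*(p*t)*q := by noncomm_ring
        _ = s*(t*k)*q := by rw [hk]
        _ = (s*t)*(k*q) := by noncomm_ring
    rw [this]; exact hD.1 _ _ hJ _
  have m3 : (1-e)*(u*(p*e)) ∈ jacobsonRadical R := by
    rw [← hf, ← hsp]
    obtain ⟨k, hk⟩ := duo_flipL hD s (q*(u*p))
    have : (t*q)*(u*(p*(s*p))) = (t*s)*(k*p) := by
      calc (t*q)*(u*(p*(s*p))) = t*((q*(u*p))*s)*p := by noncomm_ring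
        _ = t*(s*k)*p := by rw [hk]
        _ = (t*s)*(k*p) := by noncomm_ring
    rw [this]; exact hD.1 _ _ hts _
  have m4 : (e*a)*(1-e) ∈ jacobsonRadical R := by
    rw [← hf, ← hsp]
    obtain ⟨k, hk⟩ := duo_flipL hD t (p*a)
    have : ((s*p)*a)*(t*q) = (s*t)*(k*q) := by
      calc ((s*p)*a)*(t*q) = s*((p*a)*t)*q := by noncomm_ring
        _ = s*(t*k)*q := by rw [hk]
        _ = (s*t)*(k*q) := by noncomm_ring
    rw [this]; exact hD.1 _ _ hJ _
  have m5 : e*(e*(1-e)) ∈ jacobsonRadical R := Ideal.mul_mem_left _ _ m2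
  have expand : c*c'' - 1 =
      -((1-e)*e) + (-(e*(e*(1-e))) + -(e*(1-e))) + (1-e)*(u*(p*e)) + (e*a)*(1-e) := by
    rw [hc, hc'', he]
    noncomm_ring
  have hJc : c*c'' - 1 ∈ jacobsonRadical R := by
    rw [expand]
    exact add_mem (add_mem (add_mem (neg_mem m1) (add_mem (neg_mem m5) (neg_mem m2))) m3) m4
  have hunit : IsUnit (c*c'') := by
    have h1 : IsUnit (1 - -(c*c''-1)) := J_isUnit_one_sub (neg_mem hJc)
    have h2 : (1 : R) - -(c*c''-1) = c*c'' := by abel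
    rwa [h2] at h1
  obtain ⟨w, hw1, hw2⟩ := isUnit_iff_exists.mp hunit
  exact unit_of_right_inv (show c * (c''*w) = 1 by rw [← mul_assoc]; exact hw1)

theorem smul_unop (x : Rᵐᵒᵖ) (r : R) : x • r = r * x.unop := rfl

/-- Right gcd of two elements. -/
theorem gcd_right (hB : IsBezoutRing R) (a b : R) :
    ∃ d a₁ b₁ p q : R, a = d*a₁ ∧ b = d*b₁ ∧ a*p + b*q = d := by
  obtain ⟨d, hd⟩ := hB.2 (Submodule.span Rᵐᵒᵖ {a, b}) (Submodule.fg_span (Set.toFinite _))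
  have hma : a ∈ Submodule.span Rᵐᵒᵖ ({a, b} : Set R) :=
    Submodule.subset_span (Set.mem_insert _ _)
  have hmb : b ∈ Submodule.span Rᵐᵒᵖ ({a, b} : Set R) :=
    Submodule.subset_span (Set.mem_insert_of_mem _ rfl)
  rw [hd, Submodule.mem_span_singleton] at hma hmb
  obtain ⟨ca, hca⟩ := hma
  obtain ⟨cb, hcb⟩ := hmb
  have hdm : d ∈ Submodule.span Rᵐᵒᵖ ({a, b} : Set R) := by
    rw [hd]; exact Submodule.mem_span_singleton_self d
  rw [Submodule.mem_span_pair] at hdm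
  obtain ⟨cp, cq, hcpq⟩ := hdm
  refine ⟨d, ca.unop, cb.unop, cp.unop, cq.unop, ?_, ?_, ?_⟩
  · rw [← hca, smul_unop]
  · rw [← hcb, smul_unop]
  · rw [← hcpq, smul_unop, smul_unop]

/-- Right gcd of a finite family. -/
theorem gcd_fin (hB : IsBezoutRing R) {ι : Type*} [Fintype ι] (f : ι → R) :
    ∃ (d : R) (c w : ι → R), (∀ i, f i = d * c i) ∧ ∑ i, f i * w i = d := by
  obtain ⟨d, hd⟩ := hB.2 (Submodule.span Rᵐᵒᵖ (Set.range f))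
    (Submodule.fg_span (Set.finite_range f))
  have hmem : ∀ i, ∃ ci : R, f i = d * ci := by
    intro i
    have : f i ∈ Submodule.span Rᵐᵒᵖ (Set.range f) :=
      Submodule.subset_span (Set.mem_range_self i)
    rw [hd, Submodule.mem_span_singleton] at this
    obtain ⟨ci, hci⟩ := this
    exact ⟨ci.unop, by rw [← hci, smul_unop]⟩
  choose c hc using hmem
  have hdm : d ∈ Submodule.span Rᵐᵒᵖ (Set.range f) := by
    rw [hd]; exact Submodule.mem_span_singleton_self d
  rw [Submodule.mem_span_range_iff_exists_fun] at hdm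
  obtain ⟨cw, hcw⟩ := hdm
  refine ⟨d, c, fun i => (cw i).unop, hc, ?_⟩
  rw [← hcw]
  exact Finset.sum_congr rfl (fun i _ => (smul_unop _ _).symm)

/-- cancel d on the left -/
theorem cancel_left [IsDomain R] {d x : R} (hd : d ≠ 0) (hx : d * x = d) : x = 1 := by
  have : d * x = d * 1 := by rwa [mul_one]
  exact mul_left_cancel₀ hd this


theorem std_apply {s t : ℕ} (i : Fin s) (j : Fin t) (v : R) (a : Fin s) (b : Fin t) :
    (Matrix.single i j v) a b = if i = a ∧ j = b then v else 0 := rfl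

theorem std_mul_apply {s t : ℕ} (i : Fin s) (j : Fin s) (v : R) (M : Matrix (Fin s) (Fin t) R)
    (a : Fin s) (b : Fin t) :
    (Matrix.single i j v * M) a b = if a = i then v * M j b else 0 := by
  rw [Matrix.mul_apply]
  by_cases ha : a = i
  · subst ha
    simp only [std_apply, true_and, ite_mul, zero_mul]
    rw [Finset.sum_ite_eq Finset.univ j (fun k => v * M k b)]
    simp
  · have ha' : ¬ (i = a) := fun e => ha e.symm
    simp only [std_apply, ha', false_and, if_false, zero_mul, Finset.sum_const_zero, if_neg ha]

theorem mul_std_apply {s t : ℕ} (M : Matrix (Fin t) (Fin s) R) (i : Fin s) (j : Fin s) (v : R)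
    (a : Fin t) (b : Fin s) :
    (M * Matrix.single i j v) a b = if b = j then M a i * v else 0 := by
  rw [Matrix.mul_apply]
  by_cases hb : b = j
  · subst hb
    simp only [std_apply, and_true, mul_ite, mul_zero]
    have : ∀ x : Fin s, (if i = x then M a x * v else 0) = (if x = i then M a x * v else 0) := by
      intro x; by_cases h : i = x
      · subst h; simp
      · rw [if_neg h, if_neg (fun e => h e.symm)]
    rw [Finset.sum_congr rfl (fun x _ => this x)]
    rw [Finset.sum_ite_eq' Finset.univ i (fun k => M a k * v)]
    simp
  · have hb' : ¬ (j = b) := fun e => hb e.symm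
    simp only [std_apply, hb', and_false, if_false, mul_zero, Finset.sum_const_zero, if_neg hb]

/-- transvection 1 + v·E_{ij} -/
def Tv {s : ℕ} (i j : Fin s) (v : R) : Matrix (Fin s) (Fin s) R :=
  1 + Matrix.single i j v

theorem Tv_isUnit {s : ℕ} {i j : Fin s} (hij : i ≠ j) (v : R) : IsUnit (Tv i j v) := by
  have key : ∀ v w : R, Matrix.single i j v * Matrix.single i j w = (0 : Matrix (Fin s) (Fin s) R) := by
    intro v w
    ext a b
    rw [std_mul_apply]
    by_cases ha : a = i
    · rw [if_pos ha, std_apply, if_neg, mul_zero, Matrix.zero_apply]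
      rintro ⟨h1, -⟩; exact hij h1
    · rw [if_neg ha, Matrix.zero_apply]
  have mul_eq : ∀ v w : R, Tv i j v * Tv i j w = Tv i j (v + w) := by
    intro v w
    simp only [Tv]
    rw [add_mul, mul_add, mul_add, one_mul, mul_one, key, add_zero, Matrix.single_add]
    noncomm_ring
  refine isUnit_iff_exists.mpr ⟨Tv i j (-v), ?_, ?_⟩ <;>
    rw [mul_eq] <;> simp [Tv, Matrix.single_zero]

theorem mul_Tv_apply_same {s t : ℕ} (M : Matrix (Fin t) (Fin s) R) (i j : Fin s) (v : R) (a : Fin t) :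
    (M * Tv i j v) a j = M a j + M a i * v := by
  simp only [Tv, Matrix.mul_add, Matrix.mul_one, Matrix.add_apply, mul_std_apply, if_pos rfl]
  simp

theorem mul_Tv_apply_of_ne {s t : ℕ} (M : Matrix (Fin t) (Fin s) R) (i j : Fin s) (v : R) (a : Fin t)
    (b : Fin s) (hb : b ≠ j) :
    (M * Tv i j v) a b = M a b := by
  simp only [Tv, Matrix.mul_add, Matrix.mul_one, Matrix.add_apply, mul_std_apply, if_neg hb, add_zero]

theorem Tv_mul_apply_same {s t : ℕ} (M : Matrix (Fin s) (Fin t) R) (i j : Fin s) (v : R) (b : Fin t) :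
    (Tv i j v * M) i b = M i b + v * M j b := by
  simp only [Tv, Matrix.add_mul, Matrix.one_mul, Matrix.add_apply, std_mul_apply, if_pos rfl]
  simp

theorem Tv_mul_apply_of_ne {s t : ℕ} (M : Matrix (Fin s) (Fin t) R) (i j : Fin s) (v : R)
    (a : Fin s) (b : Fin t) (ha : a ≠ i) :
    (Tv i j v * M) a b = M a b := by
  simp only [Tv, Matrix.add_mul, Matrix.one_mul, Matrix.add_apply, std_mul_apply, if_neg ha, add_zero]

theorem diagonal_isUnit {s : ℕ} (f : Fin s → R) (hf : ∀ k, IsUnit (f k)) :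
    IsUnit (Matrix.diagonal f) := by
  choose g hg1 hg2 using fun k => isUnit_iff_exists.mp (hf k)
  refine isUnit_iff_exists.mpr ⟨Matrix.diagonal g, ?_, ?_⟩
  · rw [Matrix.diagonal_mul_diagonal]
    have : (fun k => f k * g k) = fun _ => (1:R) := funext hg1
    rw [this, Matrix.diagonal_one]
  · rw [Matrix.diagonal_mul_diagonal]
    have : (fun k => g k * f k) = fun _ => (1:R) := funext hg2
    rw [this, Matrix.diagonal_one]


/-- Embed a k×k matrix as the lower-right block of a (k+1)×(k+1) matrix with 1 at (0,0). -/
def lift1 {k : ℕ} (P : Matrix (Fin k) (Fin k) R) : Matrix (Fin (k+1)) (Fin (k+1)) R :=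
  Matrix.of fun i j =>
    Fin.cases (Fin.cases (1:R) (fun _ => 0) j) (fun i' => Fin.cases 0 (fun j' => P i' j') j) i

@[simp] theorem lift1_zero_zero {k : ℕ} (P : Matrix (Fin k) (Fin k) R) :
    lift1 P 0 0 = 1 := by simp [lift1]

@[simp] theorem lift1_zero_succ {k : ℕ} (P : Matrix (Fin k) (Fin k) R) (j : Fin k) :
    lift1 P 0 j.succ = 0 := by simp [lift1]

@[simp] theorem lift1_succ_zero {k : ℕ} (P : Matrix (Fin k) (Fin k) R) (i : Fin k) :
    lift1 P i.succ 0 = 0 := by simp [lift1]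

@[simp] theorem lift1_succ_succ {k : ℕ} (P : Matrix (Fin k) (Fin k) R) (i j : Fin k) :
    lift1 P i.succ j.succ = P i j := by simp [lift1]

theorem lift1_mul_apply_zero {k t : ℕ} (P : Matrix (Fin k) (Fin k) R)
    (M : Matrix (Fin (k+1)) (Fin t) R) (j : Fin t) :
    (lift1 P * M) 0 j = M 0 j := by
  rw [Matrix.mul_apply, Fin.sum_univ_succ]
  simp

theorem lift1_mul_apply_succ {k t : ℕ} (P : Matrix (Fin k) (Fin k) R)
    (M : Matrix (Fin (k+1)) (Fin t) R) (i : Fin k) (j : Fin t) :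
    (lift1 P * M) i.succ j = ∑ x, P i x * M x.succ j := by
  rw [Matrix.mul_apply, Fin.sum_univ_succ]
  simp

theorem mul_lift1_apply_zero {k t : ℕ} (Q : Matrix (Fin k) (Fin k) R)
    (M : Matrix (Fin t) (Fin (k+1)) R) (i : Fin t) :
    (M * lift1 Q) i 0 = M i 0 := by
  rw [Matrix.mul_apply, Fin.sum_univ_succ]
  simp

theorem mul_lift1_apply_succ {k t : ℕ} (Q : Matrix (Fin k) (Fin k) R)
    (M : Matrix (Fin t) (Fin (k+1)) R) (i : Fin t) (j : Fin k) :
    (M * lift1 Q) i j.succ = ∑ x, M i x.succ * Q x j := by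
  rw [Matrix.mul_apply, Fin.sum_univ_succ]
  simp

theorem lift1_mul_lift1 {k : ℕ} (P Q : Matrix (Fin k) (Fin k) R) :
    lift1 P * lift1 Q = lift1 (P * Q) := by
  ext i j
  refine Fin.cases ?_ (fun i' => ?_) i
  · refine Fin.cases ?_ (fun j' => ?_) j
    · rw [lift1_mul_apply_zero]; simp
    · rw [lift1_mul_apply_zero]; simp
  · refine Fin.cases ?_ (fun j' => ?_) j
    · rw [lift1_mul_apply_succ]; simp
    · rw [lift1_mul_apply_succ]; simp [Matrix.mul_apply]

theorem lift1_one {k : ℕ} : lift1 (1 : Matrix (Fin k) (Fin k) R) = 1 := by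
  ext i j
  refine Fin.cases ?_ (fun i' => ?_) i <;> refine Fin.cases ?_ (fun j' => ?_) j
  · simp [Matrix.one_apply]
  · simp [Matrix.one_apply, (Fin.succ_ne_zero j').symm]
  · simp [Matrix.one_apply, Fin.succ_ne_zero i']
  · simp [Matrix.one_apply, Fin.succ_inj]

theorem lift1_isUnit {k : ℕ} {P : Matrix (Fin k) (Fin k) R} (hP : IsUnit P) :
    IsUnit (lift1 P) := by
  obtain ⟨Q, h1, h2⟩ := isUnit_iff_exists.mp hP
  exact isUnit_iff_exists.mpr ⟨lift1 Q,
    by rw [lift1_mul_lift1, h1, lift1_one],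
    by rw [lift1_mul_lift1, h2, lift1_one]⟩

/-- auxiliary nilpotent part of the row-clearing matrix -/
def clearN {k : ℕ} (g : Fin (k+1) → R) : Matrix (Fin (k+1)) (Fin (k+1)) R :=
  Matrix.of (fun i j => if j = 0 then if i = 0 then 0 else g i else 0)

/-- row-clearing matrix: adds g i times row 0 to row i (for i ≠ 0). -/
def clearMat {k : ℕ} (g : Fin (k+1) → R) : Matrix (Fin (k+1)) (Fin (k+1)) R :=
  1 + clearN g

theorem clearN_mul_apply {k t : ℕ} (g : Fin (k+1) → R)
    (M : Matrix (Fin (k+1)) (Fin t) R) (a : Fin (k+1)) (b : Fin t) :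
    (clearN g * M) a b = (if a = 0 then 0 else g a) * M 0 b := by
  rw [Matrix.mul_apply]
  have step : ∀ x : Fin (k+1), clearN g a x * M x b
      = (if x = (0:Fin (k+1)) then (if a = 0 then 0 else g a) * M 0 b else 0) := by
    intro x
    by_cases hx : x = 0
    · subst hx; simp [clearN]
    · simp [clearN, hx]
  rw [Finset.sum_congr rfl (fun x _ => step x), Finset.sum_ite_eq' Finset.univ (0 : Fin (k+1))]
  simp

theorem clearMat_mul_apply_zero {k t : ℕ} (g : Fin (k+1) → R)
    (M : Matrix (Fin (k+1)) (Fin t) R) (b : Fin t) :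
    (clearMat g * M) 0 b = M 0 b := by
  rw [clearMat, Matrix.add_mul, Matrix.one_mul, Matrix.add_apply, clearN_mul_apply]
  simp

theorem clearMat_mul_apply_ne {k t : ℕ} (g : Fin (k+1) → R)
    (M : Matrix (Fin (k+1)) (Fin t) R) (a : Fin (k+1)) (ha : a ≠ 0) (b : Fin t) :
    (clearMat g * M) a b = M a b + g a * M 0 b := by
  rw [clearMat, Matrix.add_mul, Matrix.one_mul, Matrix.add_apply, clearN_mul_apply, if_neg ha]

theorem clearMat_isUnit {k : ℕ} (g : Fin (k+1) → R) : IsUnit (clearMat g) := by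
  have hNN : clearN (R := R) g * clearN g = 0 := by
    ext a b
    rw [clearN_mul_apply]
    have h0 : clearN (R := R) g 0 b = 0 := by by_cases hb : b = 0 <;> simp [clearN, hb]
    rw [h0, mul_zero, Matrix.zero_apply]
  refine isUnit_iff_exists.mpr ⟨1 - clearN g, ?_, ?_⟩
  · have : (1 + clearN (R := R) g) * (1 - clearN g) = 1 - clearN g * clearN g := by noncomm_ring
    rw [clearMat, this, hNN, sub_zero]
  · have : (1 - clearN (R := R) g) * (1 + clearN g) = 1 - clearN g * clearN g := by noncomm_ring
    rw [clearMat, this, hNN, sub_zero]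

/-- Entrywise conjugation-by-d matrix: psiMat d P i j * d = d * P i j. -/
noncomputable def psiMat (hD : IsDuoRing R) (d : R) {s t : ℕ} (P : Matrix (Fin s) (Fin t) R) :
    Matrix (Fin s) (Fin t) R :=
  Matrix.of fun i j => Classical.choose (duo_flipR hD d (P i j))

theorem psiMat_spec (hD : IsDuoRing R) (d : R) {s t : ℕ} (P : Matrix (Fin s) (Fin t) R)
    (i : Fin s) (j : Fin t) : psiMat hD d P i j * d = d * P i j :=
  (Classical.choose_spec (duo_flipR hD d (P i j))).symm

theorem psiMat_mul [IsDomain R] (hD : IsDuoRing R) {d : R} (hd : d ≠ 0) {s t u : ℕ}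
    (P : Matrix (Fin s) (Fin t) R) (Q : Matrix (Fin t) (Fin u) R) :
    psiMat hD d (P * Q) = psiMat hD d P * psiMat hD d Q := by
  ext i j
  apply mul_right_cancel₀ hd
  rw [psiMat_spec, Matrix.mul_apply, Matrix.mul_apply, Finset.mul_sum, Finset.sum_mul]
  refine Finset.sum_congr rfl (fun x _ => ?_)
  rw [mul_assoc, psiMat_spec]
  conv_rhs => rw [← mul_assoc, psiMat_spec hD d P]
  rw [mul_assoc]

theorem psiMat_one [IsDomain R] (hD : IsDuoRing R) {d : R} (hd : d ≠ 0) {s : ℕ} :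
    psiMat hD d (1 : Matrix (Fin s) (Fin s) R) = 1 := by
  ext i j
  apply mul_right_cancel₀ hd
  rw [psiMat_spec]
  by_cases hij : i = j
  · subst hij; simp
  · simp [Matrix.one_apply, hij]

theorem psiMat_isUnit [IsDomain R] (hD : IsDuoRing R) {d : R} (hd : d ≠ 0) {s : ℕ}
    {P : Matrix (Fin s) (Fin s) R} (hP : IsUnit P) : IsUnit (psiMat hD d P) := by
  obtain ⟨Q, h1, h2⟩ := isUnit_iff_exists.mp hP
  refine isUnit_iff_exists.mpr ⟨psiMat hD d Q, ?_, ?_⟩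
  · rw [← psiMat_mul hD hd, h1, psiMat_one hD hd]
  · rw [← psiMat_mul hD hd, h2, psiMat_one hD hd]

theorem psiMat_mul_smul (hD : IsDuoRing R) (d : R) {s t : ℕ}
    (P : Matrix (Fin s) (Fin s) R) (M : Matrix (Fin s) (Fin t) R) :
    psiMat hD d P * (d • M) = d • (P * M) := by
  ext i j
  rw [Matrix.mul_apply, Matrix.smul_apply, Matrix.mul_apply, smul_eq_mul, Finset.mul_sum]
  refine Finset.sum_congr rfl (fun x _ => ?_)
  rw [Matrix.smul_apply, smul_eq_mul, ← mul_assoc, psiMat_spec, mul_assoc]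


theorem fold_row [IsDomain R] (hD : IsDuoRing R) (hB : IsBezoutRing R) (h : HypH R)
    {m l : ℕ} (M : Matrix (Fin (m+1)) (Fin (l+1)) R) :
    ∃ Q : Matrix (Fin (l+1)) (Fin (l+1)) R, IsUnit Q ∧
      (∀ j : Fin (l+1), j ≠ 0 → (M*Q) 0 j = 0) ∧
      (∀ j : Fin (l+1), ∃ k, M 0 j = (M*Q) 0 0 * k) ∧
      (∃ c : Fin (l+1) → R, (M*Q) 0 0 = ∑ j, M 0 j * c j) := by
  have key : ∀ cnt : ℕ, cnt ≤ l →
      ∃ Q : Matrix (Fin (l+1)) (Fin (l+1)) R, IsUnit Q ∧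
      (∀ j : Fin (l+1), j ≠ 0 → j.val ≤ cnt → (M*Q) 0 j = 0) ∧
      (∀ j : Fin (l+1), cnt < j.val → (M*Q) 0 j = M 0 j) ∧
      (∀ j : Fin (l+1), j.val ≤ cnt → ∃ k, M 0 j = (M*Q) 0 0 * k) ∧
      (∃ c : Fin (l+1) → R, (M*Q) 0 0 = ∑ j, M 0 j * c j) := by
    intro cnt
    induction cnt with
    | zero =>
      intro _
      refine ⟨1, isUnit_one, ?_, ?_, ?_, ?_⟩
      · intro j hj hj0
        exact absurd (Fin.ext (by simp only [Fin.val_zero]; omega)) hj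
      · intro j _; rw [Matrix.mul_one]
      · intro j hj
        have : j = 0 := Fin.ext (by simp only [Fin.val_zero]; omega)
        subst this
        exact ⟨1, by rw [Matrix.mul_one, mul_one]⟩
      · refine ⟨fun j => if j = 0 then 1 else 0, ?_⟩
        rw [Matrix.mul_one]
        rw [show ∑ j, M 0 j * (if j = 0 then 1 else 0) = ∑ j, (if j = (0:Fin (l+1)) then M 0 j * 1 else 0) from Finset.sum_congr rfl (fun j _ => by by_cases hj : j = 0 <;> simp [hj])]
        rw [Finset.sum_ite_eq' Finset.univ (0 : Fin (l+1))]
        simp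
    | succ cnt ih =>
      intro hcnt
      obtain ⟨Q, hQu, hz, hunt, hmem, hcomb⟩ := ih (by omega)
      set N := M * Q with hNdef
      set jc : Fin (l+1) := ⟨cnt+1, by omega⟩ with hjc
      have hjc0 : jc ≠ 0 := by
        intro e
        have := congrArg Fin.val e
        simp [hjc] at this
      set a := N 0 0 with ha
      set b := N 0 jc with hb
      have hbM : b = M 0 jc := hunt jc (by simp [hjc])
      obtain ⟨d, a₁, b₁, p, q, hda, hdb, hdpq⟩ := gcd_right hB a b
      by_cases hd : d = 0
      · -- both are zero; nothing to do
        have ha0 : a = 0 := by rw [hda, hd, zero_mul]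
        have hb0 : b = 0 := by rw [hdb, hd, zero_mul]
        refine ⟨Q, hQu, ?_, ?_, ?_, hcomb⟩
        · intro j hj hjv
          by_cases hjcc : j = jc
          · subst hjcc; exact hb0
          · refine hz j hj ?_
            have : j.val ≠ cnt + 1 := fun e => hjcc (Fin.ext (by simp [hjc, e]))
            omega
        · intro j hjv; exact hunt j (by omega)
        · intro j hjv
          by_cases hjcc : j = jc
          · subst hjcc
            exact ⟨0, by rw [← hbM, hb0, mul_zero]⟩
          · refine hmem j ?_
            have : j.val ≠ cnt + 1 := fun e => hjcc (Fin.ext (by simp [hjc, e]))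
            omega
      · -- d ≠ 0
        have hu1 : a₁*p + b₁*q = 1 := by
          apply cancel_left (d := d) hd
          rw [mul_add, ← mul_assoc, ← mul_assoc, ← hda, ← hdb, hdpq]
        obtain ⟨z, hzu⟩ := sr1 hD h ⟨p, q, hu1⟩
        obtain ⟨u, huv1, huv2⟩ := isUnit_iff_exists.mp hzu
        set T₁ : Matrix (Fin (l+1)) (Fin (l+1)) R := Tv jc 0 z with hT₁
        set T₂ : Matrix (Fin (l+1)) (Fin (l+1)) R := Tv 0 jc (-(u * b₁)) with hT₂
        set w := a + b*z with hwdef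
        have hw : w = d * (a₁ + b₁*z) := by
          rw [hwdef, hda, hdb, mul_add, mul_assoc]
        set N₂ := N * T₁ * T₂ with hN₂
        have hpivot : N₂ 0 0 = w := by
          rw [hN₂, mul_Tv_apply_of_ne _ _ _ _ _ _ (by exact fun e => hjc0 e.symm),
            mul_Tv_apply_same]
        have hN₂jc : N₂ 0 jc = 0 := by
          rw [hN₂, mul_Tv_apply_same]
          have h1 : (N * T₁) 0 jc = N 0 jc := mul_Tv_apply_of_ne _ _ _ _ _ _ hjc0
          have h2 : (N * T₁) 0 0 = w := mul_Tv_apply_same N jc 0 z 0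
          rw [h1, h2, hw]
          rw [show d * (a₁ + b₁ * z) * -(u * b₁) = -(d * (((a₁ + b₁ * z) * u) * b₁)) by noncomm_ring]
          rw [huv1, one_mul, ← hdb]
          rw [← hb, add_neg_cancel]
        have hN₂other : ∀ j : Fin (l+1), j ≠ 0 → j ≠ jc → N₂ 0 j = N 0 j := by
          intro j hj0 hjjc
          rw [hN₂, mul_Tv_apply_of_ne _ _ _ _ _ _ hjjc, mul_Tv_apply_of_ne _ _ _ _ _ _ hj0]
        refine ⟨Q * T₁ * T₂, (hQu.mul (Tv_isUnit hjc0 z)).mul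
          (Tv_isUnit (fun e => hjc0 e.symm) _), ?_, ?_, ?_, ?_⟩
        · intro j hj hjv
          rw [show M * (Q * T₁ * T₂) = N₂ by simp only [hN₂, hNdef, Matrix.mul_assoc]]
          by_cases hjcc : j = jc
          · subst hjcc; exact hN₂jc
          · rw [hN₂other j hj hjcc]
            refine hz j hj ?_
            have : j.val ≠ cnt + 1 := fun e => hjcc (Fin.ext (by simp [hjc, e]))
            omega
        · intro j hjv
          rw [show M * (Q * T₁ * T₂) = N₂ by simp only [hN₂, hNdef, Matrix.mul_assoc]]
          have hj0 : j ≠ 0 := by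
            intro e; subst e; simp at hjv
          have hjcc : j ≠ jc := by
            intro e; subst e; simp [hjc] at hjv
          rw [hN₂other j hj0 hjcc]
          exact hunt j (by omega)
        · intro j hjv
          rw [show M * (Q * T₁ * T₂) = N₂ by simp only [hN₂, hNdef, Matrix.mul_assoc]]
          rw [hpivot, hw]
          have keyw : ∀ X : R, d * (a₁ + b₁*z) * (u * X) = d * X := by
            intro X
            rw [show d * (a₁ + b₁ * z) * (u * X) = d * ((a₁ + b₁ * z) * u * X) by noncomm_ring,
              huv1, one_mul]
          by_cases hjcc : j = jc
          · subst hjcc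
            refine ⟨u * b₁, ?_⟩
            rw [keyw, ← hdb, hbM]
          · have : j.val ≤ cnt := by
              have : j.val ≠ cnt + 1 := fun e => hjcc (Fin.ext (by simp [hjc, e]))
              omega
            obtain ⟨k, hk⟩ := hmem j this
            refine ⟨u * (a₁ * k), ?_⟩
            rw [keyw, ← mul_assoc, ← hda, ← hk]
        · obtain ⟨c, hc⟩ := hcomb
          refine ⟨fun j => c j + if j = jc then z else 0, ?_⟩
          rw [show M * (Q * T₁ * T₂) = N₂ by simp only [hN₂, hNdef, Matrix.mul_assoc]]
          rw [hpivot, hwdef, hc, hbM]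
          rw [show ∀ f g : Fin (l+1) → R, ∑ j, M 0 j * (f j + g j) = ∑ j, M 0 j * f j + ∑ j, M 0 j * g j from fun f g => by rw [← Finset.sum_add_distrib]; exact Finset.sum_congr rfl (fun j _ => by rw [mul_add])]
          congr 1
          rw [show ∑ j, M 0 j * (if j = jc then z else 0) = ∑ j, (if j = jc then M 0 j * z else 0) from Finset.sum_congr rfl (fun j _ => by by_cases hj : j = jc <;> simp [hj])]
          rw [Finset.sum_ite_eq' Finset.univ jc]
          simp
  obtain ⟨Q, hQu, hz, hunt, hmem, hcomb⟩ := key l (le_refl l)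
  refine ⟨Q, hQu, ?_, ?_, hcomb⟩
  · intro j hj
    exact hz j hj (by omega)
  · intro j
    exact hmem j (by omega)


def IsDiag {m n : ℕ} (M : Matrix (Fin m) (Fin n) R) : Prop :=
  ∀ (i : Fin m) (j : Fin n), (i : ℕ) ≠ (j : ℕ) → M i j = 0

def HasChain {m n : ℕ} (M : Matrix (Fin m) (Fin n) R) : Prop :=
  ∀ (i : Fin m) (j : Fin n) (i' : Fin m) (j' : Fin n),
    (i : ℕ) = (j : ℕ) → (i' : ℕ) = (j' : ℕ) → (i' : ℕ) = (i : ℕ) + 1 →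
    ∃ k, M i' j' = M i j * k

def DCR {m n : ℕ} (A : Matrix (Fin m) (Fin n) R) : Prop :=
  ∃ (P : Matrix (Fin m) (Fin m) R) (Q : Matrix (Fin n) (Fin n) R),
    IsUnit P ∧ IsUnit Q ∧ IsDiag (P * A * Q) ∧ HasChain (P * A * Q)

def Unimod {m n : ℕ} (M : Matrix (Fin m) (Fin n) R) : Prop :=
  ∃ c : Fin m × Fin n → R, ∑ p : Fin m × Fin n, M p.1 p.2 * c p = 1

/-- In a diagonal matrix with chain, every entry is a right multiple of the (0,0) entry. -/
theorem chain_all {m n : ℕ} (M : Matrix (Fin (m+1)) (Fin (n+1)) R)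
    (hdiag : IsDiag M) (hch : HasChain M) :
    ∀ i j, ∃ c, M i j = M 0 0 * c := by
  have main : ∀ v : ℕ, ∀ (i : Fin (m+1)) (j : Fin (n+1)), (i:ℕ) = v → (j:ℕ) = v →
      ∃ c, M i j = M 0 0 * c := by
    intro v
    induction v with
    | zero =>
      intro i j hi hj
      have hi0 : i = 0 := Fin.ext (by simp [hi])
      have hj0 : j = 0 := Fin.ext (by simp [hj])
      subst hi0; subst hj0
      exact ⟨1, by rw [mul_one]⟩
    | succ v ihv =>
      intro i j hi hj
      have hvm : v < m + 1 := by omega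
      have hvn : v < n + 1 := by omega
      obtain ⟨c₀, h₀⟩ := ihv ⟨v, hvm⟩ ⟨v, hvn⟩ rfl rfl
      have hv1 : ((⟨v, hvm⟩ : Fin (m+1)) : ℕ) = v := rfl
      have hv2 : ((⟨v, hvn⟩ : Fin (n+1)) : ℕ) = v := rfl
      obtain ⟨k, hk⟩ := hch ⟨v, hvm⟩ ⟨v, hvn⟩ i j (by omega) (by omega) (by omega)
      exact ⟨c₀ * k, by rw [hk, h₀, mul_assoc]⟩
  intro i j
  by_cases hij : (i:ℕ) = (j:ℕ)
  · exact main i i j rfl hij.symm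
  · exact ⟨0, by rw [hdiag i j hij, mul_zero]⟩

/-- Unimodularity descends along two-sided multiplication (using duo). -/
theorem unimod_of_mul (hD : IsDuoRing R) {m n m' n' : ℕ}
    (X : Matrix (Fin m') (Fin m) R) (M : Matrix (Fin m) (Fin n) R)
    (Y : Matrix (Fin n) (Fin n') R) (hu : Unimod (X * M * Y)) : Unimod M := by
  classical
  obtain ⟨c, hc⟩ := hu
  have hΦ : ∀ a r : R, r * a = a * Classical.choose (duo_flipL hD a r) :=
    fun a r => Classical.choose_spec (duo_flipL hD a r)
  refine ⟨fun q => ∑ p : Fin m' × Fin n',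
    Classical.choose (duo_flipL hD (M q.1 q.2) (X p.1 q.1)) * (Y q.2 p.2 * c p), ?_⟩
  have step1 : ∀ q : Fin m × Fin n,
      M q.1 q.2 * ∑ p : Fin m' × Fin n',
        Classical.choose (duo_flipL hD (M q.1 q.2) (X p.1 q.1)) * (Y q.2 p.2 * c p)
      = ∑ p : Fin m' × Fin n', X p.1 q.1 * M q.1 q.2 * (Y q.2 p.2 * c p) := by
    intro q
    rw [Finset.mul_sum]
    refine Finset.sum_congr rfl (fun p _ => ?_)
    rw [← mul_assoc, ← hΦ (M q.1 q.2) (X p.1 q.1)]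
  rw [Finset.sum_congr rfl (fun q _ => step1 q)]
  rw [Finset.sum_comm]
  rw [← hc]
  refine Finset.sum_congr rfl (fun p _ => ?_)
  -- ⊢ ∑ q, X p.1 q.1 * M q.1 q.2 * (Y q.2 p.2 * c p) = (X*M*Y) p.1 p.2 * c p
  rw [Matrix.mul_apply (M := X*M) (N := Y), Finset.sum_mul]
  rw [Fintype.sum_prod_type]
  rw [Finset.sum_comm]
  refine Finset.sum_congr rfl (fun l _ => ?_)
  rw [Matrix.mul_apply (M := X) (N := M), Finset.sum_mul, Finset.sum_mul]
  refine Finset.sum_congr rfl (fun k _ => ?_)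
  rw [mul_assoc, mul_assoc, mul_assoc]

/-- Kaplansky-type condition, with p = 1, from stable range 1. -/
theorem k_lite [IsDomain R] (hD : IsDuoRing R) (h : HypH R) {r₀ g e x y z : R}
    (hxyz : r₀*x + g*y + e*z = 1) :
    ∃ q α β : R, (r₀ + q*e)*α + g*β = 1 := by
  have h1 : r₀*x + (g*y+e*z)*1 = 1 := by rw [mul_one, ← add_assoc]; exact hxyz
  obtain ⟨w, hw⟩ := sr1 hD h ⟨x, 1, h1⟩
  obtain ⟨q, hq⟩ := duo_flipR hD e (z*w)
  obtain ⟨uin, hu1, hu2⟩ := isUnit_iff_exists.mp hw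
  refine ⟨q, uin, (y*w)*uin, ?_⟩
  have key : r₀ + q*e + g*(y*w) = r₀ + (g*y+e*z)*w := by
    rw [← hq]; noncomm_ring
  calc (r₀ + q*e)*uin + g*((y*w)*uin) = (r₀ + q*e + g*(y*w))*uin := by noncomm_ring
    _ = (r₀ + (g*y+e*z)*w)*uin := by rw [key]
    _ = 1 := hu1


theorem unipivot [IsDomain R] (hD : IsDuoRing R) (hB : IsBezoutRing R) (h : HypH R)
    {k l : ℕ} (B : Matrix (Fin (k+2)) (Fin (l+1)) R) (hBuni : Unimod B)
    (ih : ∀ (A' : Matrix (Fin (k+1)) (Fin (l+1)) R), DCR A') :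
    ∃ (P : Matrix (Fin (k+2)) (Fin (k+2)) R) (Q : Matrix (Fin (l+1)) (Fin (l+1)) R),
      IsUnit P ∧ IsUnit Q ∧ (P*B*Q) 0 0 = 1 ∧
      (∀ j : Fin (l+1), j ≠ 0 → (P*B*Q) 0 j = 0) ∧
      (∀ i : Fin (k+2), i ≠ 0 → (P*B*Q) i 0 = 0) := by
  classical
  set B' : Matrix (Fin (k+1)) (Fin (l+1)) R := Matrix.of (fun i j => B i.succ j) with hB'
  obtain ⟨P', Q', hP', hQ', hdiag, hchain⟩ := ih B'
  set Δ : Matrix (Fin (k+1)) (Fin (l+1)) R := P' * B' * Q' with hΔ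
  set M₁ : Matrix (Fin (k+2)) (Fin (l+1)) R := lift1 P' * B * Q' with hM₁
  have hM₁0 : ∀ j, M₁ 0 j = (B * Q') 0 j := by
    intro j; rw [hM₁, Matrix.mul_assoc, lift1_mul_apply_zero]
  have hM₁succ : ∀ (i : Fin (k+1)) (j : Fin (l+1)), M₁ i.succ j = Δ i j := by
    intro i j
    rw [hM₁, Matrix.mul_assoc, lift1_mul_apply_succ, hΔ, Matrix.mul_assoc,
      Matrix.mul_apply (M := P') (N := B' * Q')]
    refine Finset.sum_congr rfl (fun x _ => rfl)
  set e := Δ 0 0 with he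
  have hΔall : ∀ i j, ∃ c, Δ i j = e * c := chain_all Δ hdiag hchain
  have hM₁uni : Unimod M₁ := by
    obtain ⟨Pi, hPi1, hPi2⟩ := isUnit_iff_exists.mp (lift1_isUnit hP')
    obtain ⟨Qi, hQi1, hQi2⟩ := isUnit_iff_exists.mp hQ'
    have hBeq : Pi * M₁ * Qi = B := by
      rw [hM₁]
      calc Pi * (lift1 P' * B * Q') * Qi = (Pi * lift1 P') * B * (Q' * Qi) := by
            simp only [Matrix.mul_assoc]
        _ = B := by rw [hPi2, hQi1, Matrix.one_mul, Matrix.mul_one]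
    refine unimod_of_mul hD Pi M₁ Qi ?_
    rw [hBeq]; exact hBuni
  obtain ⟨cc, hcc⟩ := hM₁uni
  choose Δc hΔc using hΔall
  set z : R := ∑ p : Fin (k+1) × Fin (l+1), Δc p.1 p.2 * cc (p.1.succ, p.2) with hzdef
  have split1 : ∑ j, M₁ 0 j * cc (0, j) + e * z = 1 := by
    have he2 : e * z = ∑ i : Fin (k+1), ∑ j : Fin (l+1), M₁ i.succ j * cc (i.succ, j) := by
      rw [hzdef, Finset.mul_sum, Fintype.sum_prod_type]
      refine Finset.sum_congr rfl (fun i _ => Finset.sum_congr rfl (fun j _ => ?_))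
      show e * (Δc i j * cc (i.succ, j)) = M₁ i.succ j * cc (i.succ, j)
      rw [hM₁succ, hΔc, mul_assoc]
    calc ∑ j, M₁ 0 j * cc (0, j) + e * z
        = ∑ j, M₁ 0 j * cc (0, j) + ∑ i : Fin (k+1), ∑ j, M₁ i.succ j * cc (i.succ, j) := by
          rw [he2]
      _ = ∑ i : Fin (k+2), ∑ j, M₁ i j * cc (i, j) :=
          (Fin.sum_univ_succ (f := fun i => ∑ j, M₁ i j * cc (i, j))).symm
      _ = ∑ p : Fin (k+2) × Fin (l+1), M₁ p.1 p.2 * cc p :=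
          (Fintype.sum_prod_type (f := fun p => M₁ p.1 p.2 * cc p)).symm
      _ = 1 := hcc
  obtain ⟨g, gc, gw, hgc, hgw⟩ := gcd_fin hB (fun j' : Fin l => M₁ 0 j'.succ)
  set x : R := cc (0, (0 : Fin (l+1))) with hxdef
  set y : R := ∑ j' : Fin l, gc j' * cc (0, j'.succ) with hydef
  have hxyz : M₁ 0 0 * x + g * y + e * z = 1 := by
    rw [← split1, Fin.sum_univ_succ]
    congr 1
    congr 1
    rw [hydef, Finset.mul_sum]
    refine Finset.sum_congr rfl (fun j' _ => ?_)
    rw [← mul_assoc, ← hgc j']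
  obtain ⟨q, α, β, hklite⟩ := k_lite hD h hxyz
  have h01 : (0 : Fin (k+2)) ≠ 1 := by
    intro hh
    have := congrArg Fin.val hh
    simp [Fin.val_one] at this
  set M₂ : Matrix (Fin (k+2)) (Fin (l+1)) R := Tv (0 : Fin (k+2)) 1 q * M₁ with hM₂
  have hsz : (Fin.succ (0 : Fin (k+1)) : Fin (k+2)) = 1 := by
    apply Fin.ext; simp
  have hM₂row0 : ∀ b : Fin (l+1), M₂ 0 b = M₁ 0 b + q * M₁ 1 b := by
    intro b; rw [hM₂, Tv_mul_apply_same]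
  have hM₂00 : M₂ 0 0 = M₁ 0 0 + q * e := by
    rw [hM₂row0, ← hsz, hM₁succ, he]
  have hM₂0succ : ∀ j : Fin (l+1), j ≠ 0 → M₂ 0 j = M₁ 0 j := by
    intro j hj
    rw [hM₂row0, ← hsz, hM₁succ]
    have hjv : ((0 : Fin (k+1)) : ℕ) ≠ (j : ℕ) := by
      intro e'
      exact hj (Fin.ext (by simpa using e'.symm))
    rw [hdiag 0 j hjv, mul_zero, add_zero]
  obtain ⟨Qf, hQf, hfz, hfmem, hfcomb⟩ := fold_row hD hB h M₂
  set D := (M₂ * Qf) 0 0 with hDdef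
  choose kf hkf using hfmem
  have hDunit : IsUnit D := by
    have hgD : ∃ gk, g = D * gk := by
      refine ⟨∑ j', kf j'.succ * gw j', ?_⟩
      rw [← hgw, Finset.mul_sum]
      refine Finset.sum_congr rfl (fun j' _ => ?_)
      rw [← mul_assoc, ← hkf j'.succ, hM₂0succ j'.succ (Fin.succ_ne_zero j')]
    obtain ⟨gk, hgk⟩ := hgD
    apply unit_of_right_inv (y := kf 0 * α + gk * β)
    calc D * (kf 0 * α + gk * β) = (D * kf 0) * α + (D * gk) * β := by noncomm_ring
      _ = (M₂ 0 0) * α + g * β := by rw [← hkf 0, ← hgk]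
      _ = (M₁ 0 0 + q*e) * α + g * β := by rw [hM₂00]
      _ = 1 := hklite
  obtain ⟨Dv, hDv1, hDv2⟩ := isUnit_iff_exists.mp hDunit
  set Qs : Matrix (Fin (l+1)) (Fin (l+1)) R :=
    Matrix.diagonal (fun j => if j = 0 then Dv else 1) with hQs
  have hQsu : IsUnit Qs := by
    refine diagonal_isUnit _ (fun j => ?_)
    by_cases hj : j = 0
    · simp only [hj, if_pos rfl]
      exact isUnit_iff_exists.mpr ⟨D, hDv2, hDv1⟩
    · simp only [if_neg hj]; exact isUnit_one
  set M₄ : Matrix (Fin (k+2)) (Fin (l+1)) R := M₂ * Qf * Qs with hM₄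
  have hM₄00 : M₄ 0 0 = 1 := by
    have h1 : M₄ 0 0 = (M₂ * Qf) 0 0 * Dv := by
      rw [hM₄, hQs, Matrix.mul_diagonal]; simp
    rw [h1, ← hDdef, hDv1]
  have hM₄0j : ∀ j : Fin (l+1), j ≠ 0 → M₄ 0 j = 0 := by
    intro j hj
    rw [hM₄, hQs, Matrix.mul_diagonal, hfz j hj, zero_mul]
  set Pc : Matrix (Fin (k+2)) (Fin (k+2)) R := clearMat (fun i => -(M₄ i 0)) with hPc
  set M₅ : Matrix (Fin (k+2)) (Fin (l+1)) R := Pc * M₄ with hM₅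
  have hM₅00 : M₅ 0 0 = 1 := by rw [hM₅, hPc, clearMat_mul_apply_zero, hM₄00]
  have hM₅0j : ∀ j : Fin (l+1), j ≠ 0 → M₅ 0 j = 0 := by
    intro j hj; rw [hM₅, hPc, clearMat_mul_apply_zero, hM₄0j j hj]
  have hM₅i0 : ∀ i : Fin (k+2), i ≠ 0 → M₅ i 0 = 0 := by
    intro i hi
    rw [hM₅, hPc, clearMat_mul_apply_ne _ _ i hi, hM₄00, mul_one, add_neg_cancel]
  refine ⟨Pc * Tv (0 : Fin (k+2)) 1 q * lift1 P', Q' * Qf * Qs,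
    ((clearMat_isUnit _).mul (Tv_isUnit h01 q)).mul (lift1_isUnit hP'), (hQ'.mul hQf).mul hQsu,
    ?_, ?_, ?_⟩
  · rw [show Pc * Tv (0 : Fin (k+2)) 1 q * lift1 P' * B * (Q' * Qf * Qs) = M₅ by
      rw [hM₅, hM₄, hM₂, hM₁]; simp only [Matrix.mul_assoc]]
    exact hM₅00
  · intro j hj
    rw [show Pc * Tv (0 : Fin (k+2)) 1 q * lift1 P' * B * (Q' * Qf * Qs) = M₅ by
      rw [hM₅, hM₄, hM₂, hM₁]; simp only [Matrix.mul_assoc]]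
    exact hM₅0j j hj
  · intro i hi
    rw [show Pc * Tv (0 : Fin (k+2)) 1 q * lift1 P' * B * (Q' * Qf * Qs) = M₅ by
      rw [hM₅, hM₄, hM₂, hM₁]; simp only [Matrix.mul_assoc]]
    exact hM₅i0 i hi


theorem dcr_all [IsDomain R] (hD : IsDuoRing R) (hB : IsBezoutRing R) (h : HypH R) :
    ∀ (m n : ℕ) (A : Matrix (Fin m) (Fin n) R), DCR A := by
  intro m
  induction m with
  | zero =>
    intro n A
    exact ⟨1, 1, isUnit_one, isUnit_one, fun i => i.elim0, fun i => i.elim0⟩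
  | succ k ihm =>
    intro n A
    match n, A with
    | 0, A => exact ⟨1, 1, isUnit_one, isUnit_one, fun i j => j.elim0, fun i j => j.elim0⟩
    | (l+1), A =>
    match k, ihm, A with
    | 0, ihm, A =>
      obtain ⟨Q, hQu, hfz, -, -⟩ := fold_row hD hB h (m := 0) A
      refine ⟨1, Q, isUnit_one, hQu, ?_, ?_⟩
      · intro i j hij
        have hi : i = 0 := Fin.ext (by omega)
        subst hi
        have hj : j ≠ 0 := by
          intro e; subst e; simp at hij
        rw [Matrix.one_mul]
        exact hfz j hj
      · intro i j i' j' _ _ hcons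
        exfalso
        have hi' := i'.isLt
        have hi := i.isLt
        omega
    | (k'+1), ihm, A =>
      by_cases hA : A = 0
      · subst hA
        refine ⟨1, 1, isUnit_one, isUnit_one, ?_, ?_⟩
        · intro i j _; simp
        · intro i j i' j' _ _ _; exact ⟨0, by simp⟩
      · obtain ⟨d, cm, wm, hentry, hcombo⟩ :=
          gcd_fin hB (fun p : Fin (k'+2) × Fin (l+1) => A p.1 p.2)
        set B : Matrix (Fin (k'+2)) (Fin (l+1)) R := Matrix.of (fun i j => cm (i, j)) with hBdef
        have hAB : A = d • B := by
          ext i j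
          rw [Matrix.smul_apply, smul_eq_mul]
          exact hentry (i, j)
        have hd : d ≠ 0 := by
          intro hd0
          apply hA
          ext i j
          have hx := hentry (i, j)
          rw [hd0, zero_mul] at hx
          simpa using hx
        have hBuni : Unimod B := by
          refine ⟨wm, ?_⟩
          apply mul_left_cancel₀ hd
          rw [Finset.mul_sum, mul_one]
          calc ∑ p : Fin (k'+2) × Fin (l+1), d * (B p.1 p.2 * wm p)
              = ∑ p : Fin (k'+2) × Fin (l+1), A p.1 p.2 * wm p :=
                Finset.sum_congr rfl (fun p _ => by rw [← mul_assoc]; congr 1; exact (hentry p).symm)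
            _ = d := hcombo
        obtain ⟨P₀, Q₀, hP₀, hQ₀, h00, h0j, hi0⟩ := unipivot hD hB h B hBuni (ihm (l+1))
        set M₅ : Matrix (Fin (k'+2)) (Fin (l+1)) R := P₀ * B * Q₀ with hM₅
        set C : Matrix (Fin (k'+1)) (Fin l) R := Matrix.of (fun i j => M₅ i.succ j.succ) with hC
        obtain ⟨PC, QC, hPC, hQC, hCdiag, hCchain⟩ := ihm l C
        set G : Matrix (Fin (k'+1)) (Fin l) R := PC * C * QC with hG
        set P₁ : Matrix (Fin (k'+2)) (Fin (k'+2)) R := lift1 PC * P₀ with hP₁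
        set Q₁ : Matrix (Fin (l+1)) (Fin (l+1)) R := Q₀ * lift1 QC with hQ₁
        set Δ : Matrix (Fin (k'+2)) (Fin (l+1)) R := P₁ * B * Q₁ with hΔdef
        have hΔeq : Δ = lift1 PC * M₅ * lift1 QC := by
          rw [hΔdef, hP₁, hQ₁, hM₅]; simp only [Matrix.mul_assoc]
        have hΔ00 : Δ 0 0 = 1 := by
          rw [hΔeq, mul_lift1_apply_zero, lift1_mul_apply_zero]
          exact h00
        have hΔ0succ : ∀ j : Fin l, Δ 0 j.succ = 0 := by
          intro j
          rw [hΔeq, mul_lift1_apply_succ]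
          refine Finset.sum_eq_zero (fun x _ => ?_)
          rw [lift1_mul_apply_zero, h0j x.succ (Fin.succ_ne_zero x), zero_mul]
        have hΔsucc0 : ∀ i : Fin (k'+1), Δ i.succ 0 = 0 := by
          intro i
          rw [hΔeq, mul_lift1_apply_zero, lift1_mul_apply_succ]
          refine Finset.sum_eq_zero (fun x _ => ?_)
          rw [hi0 x.succ (Fin.succ_ne_zero x), mul_zero]
        have hΔss : ∀ (i : Fin (k'+1)) (j : Fin l), Δ i.succ j.succ = G i j := by
          intro i j
          rw [hΔeq, mul_lift1_apply_succ, hG, Matrix.mul_apply (M := PC * C) (N := QC)]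
          refine Finset.sum_congr rfl (fun x _ => ?_)
          congr 1
          rw [lift1_mul_apply_succ, Matrix.mul_apply]
          exact Finset.sum_congr rfl (fun y _ => rfl)
        have hPU : IsUnit P₁ := (lift1_isUnit hPC).mul hP₀
        have hQU : IsUnit Q₁ := hQ₀.mul (lift1_isUnit hQC)
        have hfinal : psiMat hD d P₁ * A * Q₁ = d • Δ := by
          rw [hAB, psiMat_mul_smul hD d P₁ B, Matrix.smul_mul, hΔdef]
        refine ⟨psiMat hD d P₁, Q₁, psiMat_isUnit hD hd hPU, hQU, ?_, ?_⟩
        · rw [hfinal]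
          intro i j hij
          rw [Matrix.smul_apply, smul_eq_mul]
          rcases Fin.eq_zero_or_eq_succ i with hi | ⟨i', rfl⟩
          · subst hi
            rcases Fin.eq_zero_or_eq_succ j with hj | ⟨j', rfl⟩
            · subst hj; exact absurd rfl hij
            · rw [hΔ0succ j', mul_zero]
          · rcases Fin.eq_zero_or_eq_succ j with hj | ⟨j', rfl⟩
            · subst hj; rw [hΔsucc0 i', mul_zero]
            · rw [hΔss i' j']
              have hv : (i' : ℕ) ≠ (j' : ℕ) := by
                intro e
                apply hij
                rw [Fin.val_succ, Fin.val_succ, e]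
              rw [hCdiag i' j' hv, mul_zero]
        · rw [hfinal]
          intro i j i' j' hij hij' hcons
          obtain ⟨i₁, rfl⟩ : ∃ i₁ : Fin (k'+1), i' = i₁.succ := by
            refine i'.eq_succ_of_ne_zero ?_
            intro e; subst e; simp at hcons
          obtain ⟨j₁, rfl⟩ : ∃ j₁ : Fin l, j' = j₁.succ := by
            refine j'.eq_succ_of_ne_zero ?_
            intro e; subst e
            rw [Fin.val_succ] at hij'
            simp at hij'
          rcases Fin.eq_zero_or_eq_succ i with hi | ⟨i₀, rfl⟩
          · subst hi
            have hj0 : j = 0 := by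
              apply Fin.ext
              rw [Fin.val_zero]
              simp only [Fin.val_zero] at hij
              omega
            subst hj0
            refine ⟨Δ i₁.succ j₁.succ, ?_⟩
            rw [Matrix.smul_apply, Matrix.smul_apply, smul_eq_mul, smul_eq_mul, hΔ00, mul_one]
          · obtain ⟨j₀, rfl⟩ : ∃ j₀ : Fin l, j = j₀.succ := by
              refine j.eq_succ_of_ne_zero ?_
              intro e; subst e
              rw [Fin.val_succ] at hij
              simp at hij
            have hv1 : (i₀ : ℕ) = (j₀ : ℕ) := by
              rw [Fin.val_succ, Fin.val_succ] at hij; omega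
            have hv2 : (i₁ : ℕ) = (j₁ : ℕ) := by
              rw [Fin.val_succ, Fin.val_succ] at hij'; omega
            have hv3 : (i₁ : ℕ) = (i₀ : ℕ) + 1 := by
              rw [Fin.val_succ, Fin.val_succ] at hcons; omega
            obtain ⟨c, hc⟩ := hCchain i₀ j₀ i₁ j₁ hv1 hv2 hv3
            refine ⟨c, ?_⟩
            rw [Matrix.smul_apply, Matrix.smul_apply, smul_eq_mul, smul_eq_mul,
              hΔss i₁ j₁, hΔss i₀ j₀, hc, mul_assoc]


end Stmt11


/-- If `R` is a Bézout duo-domain such that whenever `aR + bR = R`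
there are `x, y` with `xR + yR = R`, `xy ∈ J(R)`, `x ∈ aR` and `y ∈ bR`, then `R` is an
elementary divisor ring. -/
theorem stmt11 (R : Type*) [Ring R] [IsDomain R]
    (hB : IsBezoutRing R) (hD : IsDuoRing R)
    (h : ∀ a b : R, (∃ x y : R, a * x + b * y = 1) →
      ∃ x y : R, (∃ u v : R, x * u + y * v = 1) ∧ x * y ∈ jacobsonRadical R ∧
        (∃ u : R, x = a * u) ∧ (∃ v : R, y = b * v)) :
    ElementaryDivisorRing R := by
  intro m n A
  obtain ⟨P, Q, hP, hQ, hdiag, hchain⟩ := Stmt11.dcr_all hD hB h m n A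
  refine ⟨P, Q, hP, hQ, hdiag, ?_⟩
  intro i j i' j' hij hij' hcons x y
  obtain ⟨kk, hkk⟩ := hchain i j i' j' hij hij' hcons
  set a := (P*A*Q) i j with ha
  obtain ⟨x', hx'⟩ := Stmt11.duo_flipL hD a x
  have key : x * (P*A*Q) i' j' * y = a * (x' * (kk * y)) := by
    rw [hkk]
    calc x * (a * kk) * y = (x * a) * (kk * y) := by noncomm_ring
      _ = (a * x') * (kk * y) := by rw [hx']
      _ = a * (x' * (kk * y)) := by rw [mul_assoc]
  constructor
  · exact ⟨x' * (kk * y), key⟩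
  · obtain ⟨v, hv⟩ := Stmt11.duo_flipR hD a (x' * (kk * y))
    exact ⟨v, by rw [key, hv]⟩
end

section
/- Let R be a Bézout duo-domain. Then every feckly adequate element of R is stable, i.e., if c ∈ R is feckly adequate then R/cR has stable range 1. -/
section MyAux13

variable {R : Type*} [Ring R]

lemma myduo_commR (hD : IsDuoRing R) (p q : R) : ∃ q', q * p = p * q' := by
  have h := hD.2 (Submodule.span Rᵐᵒᵖ {p}) p (Submodule.subset_span rfl) q
  rw [Submodule.mem_span_singleton] at h
  obtain ⟨α, hα⟩ := h
  exact ⟨α.unop, by simpa [MulOpposite.smul_eq_mul_unop] using hα.symm⟩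

lemma myduo_commL (hD : IsDuoRing R) (p q : R) : ∃ q', p * q = q' * p := by
  have h := hD.1 (Ideal.span {p}) p (Ideal.subset_span rfl) q
  rw [Ideal.mem_span_singleton'] at h
  obtain ⟨α, hα⟩ := h
  exact ⟨α, hα.symm⟩

lemma mymem_span_c (hD : IsDuoRing R) (c w : R) :
    w ∈ TwoSidedIdeal.span {c} ↔ ∃ z, w = c * z := by
  constructor
  · intro hw
    have := TwoSidedIdeal.mem_span_iff.mp hw
      (TwoSidedIdeal.mk' {w : R | ∃ z, w = c * z}
        ⟨0, (mul_zero c).symm⟩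
        (by rintro x y ⟨z1, rfl⟩ ⟨z2, rfl⟩; exact ⟨z1 + z2, (mul_add c z1 z2).symm⟩)
        (by rintro x ⟨z, rfl⟩; exact ⟨-z, (mul_neg c z).symm⟩)
        (fun {x y} hy => by
            obtain ⟨z, rfl⟩ := hy
            obtain ⟨x', hx'⟩ := myduo_commR hD c x
            exact ⟨x' * z, by rw [← mul_assoc, hx', mul_assoc]⟩)
        (fun {x y} hx => by
            obtain ⟨z, rfl⟩ := hx
            exact ⟨z * y, by rw [mul_assoc]⟩))
      (by rintro w rfl; exact (TwoSidedIdeal.mem_mk' _ _ _ _ _ _ w).mpr ⟨1, (mul_one w).symm⟩)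
    rwa [TwoSidedIdeal.mem_mk'] at this
  · rintro ⟨z, rfl⟩
    exact (TwoSidedIdeal.span {c}).mul_mem_right c z (TwoSidedIdeal.subset_span rfl)

lemma mymax_prime (hD : IsDuoRing R) {M : Ideal R} (hM : M.IsMaximal) {p q : R}
    (hpq : p * q ∈ M) (hq : q ∉ M) : p ∈ M := by
  have hlt : M < M ⊔ Ideal.span {q} := by
    refine lt_of_le_of_ne le_sup_left (fun h => hq ?_)
    rw [h]
    exact Submodule.mem_sup_right (Ideal.subset_span rfl)
  have htop : M ⊔ Ideal.span {q} = ⊤ := hM.1.2 _ hlt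
  have h1 : (1 : R) ∈ M ⊔ Ideal.span {q} := htop ▸ trivial
  obtain ⟨m, hm, t, ht, hmt⟩ := Submodule.mem_sup.mp h1
  obtain ⟨γ, hγ⟩ := Ideal.mem_span_singleton'.mp ht
  obtain ⟨γ', hγ'⟩ := myduo_commL hD p γ
  have : p = p * m + γ' * (p * q) := by
    calc p = p * (m + γ * q) := by rw [hγ, hmt, mul_one]
    _ = p * m + (p * γ) * q := by rw [mul_add, mul_assoc]
    _ = p * m + γ' * (p * q) := by rw [hγ', mul_assoc]
  rw [this]
  exact M.add_mem (M.mul_mem_left p hm) (M.mul_mem_left γ' hpq)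

lemma myjac_left_inv {m : R} (hm : m ∈ jacobsonRadical R) : ∃ k, k * (1 + m) = 1 := by
  by_contra h
  push_neg at h
  have hne : Ideal.span {(1 + m)} ≠ ⊤ := by
    intro ht
    rw [Ideal.eq_top_iff_one, Ideal.mem_span_singleton'] at ht
    obtain ⟨k, hk⟩ := ht
    exact h k hk
  obtain ⟨M, hM, hle⟩ := Ideal.exists_le_maximal _ hne
  have h1m : (1 + m) ∈ M := hle (Ideal.subset_span rfl)
  have hmM : m ∈ M := (sInf_le ⟨bot_le, hM⟩ : jacobsonRadical R ≤ M) hm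
  have h1 : (1 : R) ∈ M := by
    have := M.sub_mem h1m hmM
    simpa using this
  exact hM.ne_top ((Ideal.eq_top_iff_one M).mpr h1)

lemma myjac_unit {m : R} (hm : m ∈ jacobsonRadical R) : IsUnit (1 + m) := by
  obtain ⟨k, hk⟩ := myjac_left_inv hm
  have hk1 : k = 1 + -(k * m) := by
    have h2 : k + k * m = 1 := by rw [← hk]; noncomm_ring
    rw [← h2]; abel
  have hmem : -(k * m) ∈ jacobsonRadical R := neg_mem (Ideal.mul_mem_left _ k hm)
  obtain ⟨k', hk'⟩ := myjac_left_inv hmem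
  have hk'k : k' * k = 1 := by rw [hk1]; exact hk'
  have hk'e : k' = 1 + m := by
    calc k' = k' * (k * (1 + m)) := by rw [hk, mul_one]
    _ = (k' * k) * (1 + m) := by rw [mul_assoc]
    _ = 1 + m := by rw [hk'k, one_mul]
  exact ⟨⟨1 + m, k, by rw [← hk'e]; exact hk'k, hk⟩, rfl⟩

end MyAux13

/-- In a Bézout duo-domain, every feckly adequate element `c` is stable,
i.e., `R/cR` has stable range 1. -/
theorem stmt13 (R : Type*) [Ring R] [IsDomain R]
    (hB : IsBezoutRing R) (hD : IsDuoRing R)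
    (c : R) (hc : IsFecklyAdequateElement c) :
    HasStableRange1 (QuotBy c) := by
  intro A B hAB
  obtain ⟨X, Y, hXY⟩ := hAB
  obtain ⟨a, rfl⟩ := Quotient.exists_rep A
  obtain ⟨b, rfl⟩ := Quotient.exists_rep B
  obtain ⟨x, rfl⟩ := Quotient.exists_rep X
  obtain ⟨y, rfl⟩ := Quotient.exists_rep Y
  -- extract the lifted relation a*x + b*y + c*z = 1
  have hmem : a * x + b * y - 1 ∈ TwoSidedIdeal.span {c} := by
    rw [← TwoSidedIdeal.rel_iff]
    exact Quotient.eq''.mp hXY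
  obtain ⟨z0, hz0⟩ := (mymem_span_c hD c _).mp hmem
  have hz : a * x + b * y + c * (-z0) = 1 := by
    rw [mul_neg, ← hz0]; abel
  set z := -z0 with hzdef
  -- feckly adequacy at a
  obtain ⟨r, s, hj, ⟨x₁, y₁, hra⟩, hs'⟩ := hc a
  set g := a + b * (y * r) with hgdef
  -- Step 1 : g and r are right comaximal
  obtain ⟨y₁', h1⟩ := myduo_commL hD r y₁
  set δ := b * (y * y₁') with hδdef
  have hδ : b * (y * r) * y₁ = δ * r := by
    simp only [hδdef, mul_assoc, h1]
  obtain ⟨δ', hδ'⟩ := myduo_commR hD r δ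
  set q₁ := x₁ - δ' with hq₁def
  have hstep1 : g * y₁ + r * q₁ = 1 := by
    have e1 : g * y₁ = a * y₁ + δ * r := by
      rw [hgdef, add_mul, hδ]
    rw [e1, hδ', hq₁def, mul_sub]
    have : a * y₁ + r * δ' + (r * x₁ - r * δ') = r * x₁ + a * y₁ := by abel
    rw [this, hra]
  -- Step 2 : g and s are right comaximal
  have hstep2 : ∃ p₂ q₂ : R, g * p₂ + s * q₂ = 1 := by
    have hfg : (Submodule.span Rᵐᵒᵖ ({g, s} : Set R)).FG :=
      Submodule.fg_span ((Set.finite_singleton s).insert g)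
    obtain ⟨d, hd⟩ := hB.2 _ hfg
    have hg : ∃ w, g = d * w := by
      have : g ∈ Submodule.span Rᵐᵒᵖ ({d} : Set R) := by
        rw [← hd]; exact Submodule.subset_span (by simp)
      obtain ⟨α, hα⟩ := Submodule.mem_span_singleton.mp this
      exact ⟨α.unop, by simpa [MulOpposite.smul_eq_mul_unop] using hα.symm⟩
    have hsd : ∃ u, s = d * u := by
      have : s ∈ Submodule.span Rᵐᵒᵖ ({d} : Set R) := by
        rw [← hd]; exact Submodule.subset_span (by simp)
      obtain ⟨α, hα⟩ := Submodule.mem_span_singleton.mp this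
      exact ⟨α.unop, by simpa [MulOpposite.smul_eq_mul_unop] using hα.symm⟩
    by_cases hdu : IsUnit d
    · -- d unit : 1 ∈ gR + sR
      have hdmem : d ∈ Submodule.span Rᵐᵒᵖ ({g, s} : Set R) := by
        rw [hd]; exact Submodule.subset_span rfl
      obtain ⟨α, β, hαβ⟩ := Submodule.mem_span_pair.mp hdmem
      obtain ⟨dd, hdd⟩ := hdu
      refine ⟨α.unop * ↑dd⁻¹, β.unop * ↑dd⁻¹, ?_⟩
      have hαβ' : g * α.unop + s * β.unop = d := by
        simpa [MulOpposite.smul_eq_mul_unop] using hαβ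
      calc g * (α.unop * ↑dd⁻¹) + s * (β.unop * ↑dd⁻¹)
          = (g * α.unop + s * β.unop) * ↑dd⁻¹ := by noncomm_ring
        _ = d * ↑dd⁻¹ := by rw [hαβ']
        _ = 1 := by rw [← hdd]; exact dd.mul_inv
    · -- d not a unit: contradiction with adequacy
      exfalso
      have hnc := hs' d hdu hsd
      have hproper : Ideal.span ({d, a} : Set R) ≠ ⊤ := by
        intro ht
        rw [Ideal.eq_top_iff_one] at ht
        obtain ⟨α, β, hαβ⟩ := Ideal.mem_span_pair.mp ht
        obtain ⟨α', hα'⟩ := myduo_commR hD d α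
        obtain ⟨β', hβ'⟩ := myduo_commR hD a β
        exact hnc ⟨α', β', by rw [← hα', ← hβ']; exact hαβ⟩
      obtain ⟨M, hM, hle⟩ := Ideal.exists_le_maximal _ hproper
      have hdM : d ∈ M := hle (Ideal.subset_span (by simp))
      have haM : a ∈ M := hle (Ideal.subset_span (by simp))
      have hsM : s ∈ M := by
        obtain ⟨u, hu⟩ := hsd; rw [hu]; exact hD.1 M d hdM u
      have hgM : g ∈ M := by
        obtain ⟨w, hw⟩ := hg; rw [hw]; exact hD.1 M d hdM w
      have hbyr : (b * y) * r ∈ M := by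
        have h2 := M.sub_mem hgM haM
        have : g - a = (b * y) * r := by rw [hgdef]; noncomm_ring
        rwa [this] at h2
      have hone : (1 : R) ∉ M := fun h => hM.ne_top ((Ideal.eq_top_iff_one M).mpr h)
      by_cases hrM : r ∈ M
      · exact hone (by rw [← hra]; exact M.add_mem (hD.1 M r hrM x₁) (hD.1 M a haM y₁))
      · have hby : b * y ∈ M := mymax_prime hD hM hbyr hrM
        have hcM : c ∈ M := by
          have hrs : r * s ∈ M := M.mul_mem_left r hsM
          have hjM : c - r * s ∈ M := (sInf_le ⟨bot_le, hM⟩ : jacobsonRadical R ≤ M) hj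
          have := M.add_mem hjM hrs
          simpa using this
        exact hone (by
          rw [← hz]
          exact M.add_mem (M.add_mem (hD.1 M a haM x) hby) (hD.1 M c hcM z))
  obtain ⟨p₂, q₂, hstep2⟩ := hstep2
  -- Step 3 : g and r*s are right comaximal
  obtain ⟨h, hh⟩ := myduo_commR hD g (r * q₁)
  obtain ⟨q₃, hq₃⟩ := myduo_commR hD s q₁
  have hstep3 : g * (y₁ + h * p₂) + (r * s) * (q₃ * q₂) = 1 := by
    calc g * (y₁ + h * p₂) + (r * s) * (q₃ * q₂)
        = g * y₁ + (g * h) * p₂ + (r * (s * q₃)) * q₂ := by noncomm_ring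
      _ = g * y₁ + ((r * q₁) * g) * p₂ + (r * (q₁ * s)) * q₂ := by rw [hh, hq₃]
      _ = g * y₁ + (r * q₁) * (g * p₂ + s * q₂) := by noncomm_ring
      _ = g * y₁ + (r * q₁) * 1 := by rw [hstep2]
      _ = g * y₁ + r * q₁ := by rw [mul_one]
      _ = 1 := hstep1
  -- Step 4 : g and c are right comaximal
  set PP := y₁ + h * p₂ with hPP
  set QQ := q₃ * q₂ with hQQ
  have h4 : g * PP + c * QQ = 1 + (c - r * s) * QQ := by
    calc g * PP + c * QQ = (g * PP + (r * s) * QQ) + (c - r * s) * QQ := by noncomm_ring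
      _ = 1 + (c - r * s) * QQ := by rw [hstep3]
  have hunit : IsUnit (1 + (c - r * s) * QQ) := myjac_unit (hD.1 _ _ hj QQ)
  obtain ⟨ε, hε⟩ := hunit
  set u := PP * (↑ε⁻¹ : R) with hu
  set v := QQ * (↑ε⁻¹ : R) with hv
  have h5 : g * u + c * v = 1 := by
    calc g * u + c * v = (g * PP + c * QQ) * (↑ε⁻¹ : R) := by rw [hu, hv]; noncomm_ring
      _ = (1 + (c - r * s) * QQ) * (↑ε⁻¹ : R) := by rw [h4]
      _ = (↑ε : R) * (↑ε⁻¹ : R) := by rw [hε]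
      _ = 1 := ε.mul_inv
  -- Step 5 : conclude in the quotient
  refine ⟨((y * r : R) : QuotBy c), ?_⟩
  show IsUnit (((g : R) : QuotBy c))
  have hzero : ∀ w : R, w ∈ TwoSidedIdeal.span {c} → ((w : R) : QuotBy c) = 0 := by
    intro w hw
    have : ((w : R) : QuotBy c) = ((0 : R) : QuotBy c) := by
      apply Quotient.sound
      change (TwoSidedIdeal.span {c}).ringCon w 0
      rw [TwoSidedIdeal.rel_iff]
      simpa using hw
    simpa using this
  have hgu : ((g : R) : QuotBy c) * ((u : R) : QuotBy c) = 1 := by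
    have e2 : ((g * u : R) : QuotBy c) + ((c * v : R) : QuotBy c) = 1 := by
      have : ((g * u + c * v : R) : QuotBy c) = ((1 : R) : QuotBy c) := by rw [h5]
      exact this
    have hcv : ((c * v : R) : QuotBy c) = 0 :=
      hzero _ ((TwoSidedIdeal.span {c}).mul_mem_right c v (TwoSidedIdeal.subset_span rfl))
    rw [hcv, add_zero] at e2
    exact e2
  obtain ⟨u', hu'⟩ := myduo_commL hD g u
  obtain ⟨v', hv'⟩ := myduo_commL hD c v
  have hug : ((u' : R) : QuotBy c) * ((g : R) : QuotBy c) = 1 := by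
    have h5' : u' * g + v' * c = 1 := by rw [← hu', ← hv']; exact h5
    have e2 : ((u' * g : R) : QuotBy c) + ((v' * c : R) : QuotBy c) = 1 := by
      have : ((u' * g + v' * c : R) : QuotBy c) = ((1 : R) : QuotBy c) := by rw [h5']
      exact this
    have hcv : ((v' * c : R) : QuotBy c) = 0 :=
      hzero _ ((TwoSidedIdeal.span {c}).mul_mem_left v' c (TwoSidedIdeal.subset_span rfl))
    rw [hcv, add_zero] at e2
    exact e2
  have huu : ((u' : R) : QuotBy c) = ((u : R) : QuotBy c) := by
    rw [← mul_one ((u' : R) : QuotBy c), ← hgu, ← mul_assoc, hug, one_mul]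
  exact ⟨⟨((g : R) : QuotBy c), ((u : R) : QuotBy c), hgu, by rw [← huu]; exact hug⟩, rfl⟩
end
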